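/- Consistency lemma for the eikonal equation, second version (Lemma 3.5). Let v : ℝ^N → ℝ be Lipschitz, let φ : (0,T]×ℝ^N → ℝ be bounded and C¹, and let (t₀,x₀) ∈ (0,T)×ℝ^N. There exists a function o : (0,1)×(0,1) → [0,∞) with o(ε,r) → 0 as (ε,r) → (0,0) such that for all sufficiently small ε, r > 0 and all (t,x) in the ball B_r(t₀,x₀) there exist positive numbers m and M (possibly depending on ε, t, x) with m·(∂_tφ(t₀,x₀) + v(x₀)|D_xφ(t₀,x₀)| − o(ε,r)) ≤ S^ε[φ](t,x) − φ(t,x) ≤ M·(∂_tφ(t₀,x₀) + v(x₀)|D_xφ(t₀,x₀)| + o(ε,r)). -/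

import Mathlib

open MeasureTheory Metric Set Filter Topology RealInnerProductSpace

noncomputable section

attribute [local instance] Classical.propDecidable

/-- ℝ^N. -/
abbrev Euc (N : ℕ) := EuclideanSpace ℝ (Fin N)

/-- The cut-off function `C_ε(r) = (r ∨ ε^{3/2}) ∧ ε^{1/2}`. -/
def cutC (ε r : ℝ) : ℝ := min (max r (ε ^ ((3:ℝ)/2))) (ε ^ ((1:ℝ)/2))

/-- Paul's admissible positions `E^+(x)`. -/
def Eplus {N : ℕ} (v : Euc N → ℝ) (ε : ℝ) (x : Euc N) : Set (Euc N) :=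
  if (ball x ε ∩ {y | 0 < v y}).Nonempty then ball x ε ∩ {y | 0 < v y} else {x}

/-- Carol's admissible positions `E^-(x)`. -/
def Eminus {N : ℕ} (v : Euc N → ℝ) (ε : ℝ) (x : Euc N) : Set (Euc N) :=
  if (ball x ε ∩ {y | v y < 0}).Nonempty then ball x ε ∩ {y | v y < 0} else {x}

/-- Paul's time increment `T_P(x,x')`. -/
def TPe {N : ℕ} (v : Euc N → ℝ) (ε : ℝ) (x x' : Euc N) : ℝ :=
  if (ball x ε ∩ {y | 0 < v y}).Nonempty then cutC ε (ε / max (v x') 0) else ε ^ 2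

/-- Carol's time increment `T_C(x,x')`. -/
def TCe {N : ℕ} (v : Euc N → ℝ) (ε : ℝ) (x x' : Euc N) : ℝ :=
  if (ball x ε ∩ {y | v y < 0}).Nonempty then cutC ε (ε / max (-v x') 0) else ε ^ 2

/-- The operator `R^ε[φ](t,x) = sup_{x_P ∈ E^+(x)} φ(t + T_P(x,x_P), x_P)`. -/
def Rup {N : ℕ} (v : Euc N → ℝ) (ε : ℝ) (φ : ℝ → Euc N → ℝ) (t : ℝ) (x : Euc N) : ℝ :=
  sSup ((fun xP => φ (t + TPe v ε x xP) xP) '' Eplus v ε x)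

/-- The operator `R_ε[φ](t,x) = inf_{x_C ∈ E^-(x)} φ(t + T_C(x,x_C), x_C)`. -/
def Rlo {N : ℕ} (v : Euc N → ℝ) (ε : ℝ) (φ : ℝ → Euc N → ℝ) (t : ℝ) (x : Euc N) : ℝ :=
  sInf ((fun xC => φ (t + TCe v ε x xC) xC) '' Eminus v ε x)

/-- The one-step game operator `S^ε[φ](t,x)` for the eikonal game. -/
def Seik {N : ℕ} (v : Euc N → ℝ) (ε : ℝ) (φ : ℝ → Euc N → ℝ) (t : ℝ) (x : Euc N) : ℝ :=
  sSup ((fun xP =>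
      sInf ((fun xC => φ (t + TPe v ε x xP + TCe v ε xP xC) xC) '' Eminus v ε xP)) ''
    Eplus v ε x)

/-- Viscosity subsolution of `−∂_t u − v(x)|Du| = 0` on `(0,T)×ℝ^N`. -/
def EikSubsol {N : ℕ} (v : Euc N → ℝ) (T : ℝ) (u : ℝ → Euc N → ℝ) : Prop :=
  UpperSemicontinuousOn (fun p : ℝ × Euc N => u p.1 p.2) (Ioo (0:ℝ) T ×ˢ univ) ∧
  ∀ φ : ℝ → Euc N → ℝ, ContDiff ℝ 2 (fun p : ℝ × Euc N => φ p.1 p.2) →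
    ∀ t ∈ Ioo (0:ℝ) T, ∀ x : Euc N,
      (∃ δ > (0:ℝ), ∀ s ∈ Ioo (0:ℝ) T, ∀ y : Euc N, |s - t| < δ → dist y x < δ →
        u s y - φ s y ≤ u t x - φ t x) →
      -(deriv (fun s => φ s x) t) - v x * ‖gradient (φ t) x‖ ≤ 0

/-- Viscosity supersolution of `−∂_t u − v(x)|Du| = 0` on `(0,T)×ℝ^N`. -/
def EikSupersol {N : ℕ} (v : Euc N → ℝ) (T : ℝ) (u : ℝ → Euc N → ℝ) : Prop :=
  LowerSemicontinuousOn (fun p : ℝ × Euc N => u p.1 p.2) (Ioo (0:ℝ) T ×ˢ univ) ∧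
  ∀ φ : ℝ → Euc N → ℝ, ContDiff ℝ 2 (fun p : ℝ × Euc N => φ p.1 p.2) →
    ∀ t ∈ Ioo (0:ℝ) T, ∀ x : Euc N,
      (∃ δ > (0:ℝ), ∀ s ∈ Ioo (0:ℝ) T, ∀ y : Euc N, |s - t| < δ → dist y x < δ →
        u t x - φ t x ≤ u s y - φ s y) →
      0 ≤ -(deriv (fun s => φ s x) t) - v x * ‖gradient (φ t) x‖

/-- Upper relaxed semi-limit `limsup* u^ε`. -/
def relaxSup {N : ℕ} (u : ℝ → ℝ → Euc N → ℝ) (t : ℝ) (x : Euc N) : ℝ :=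
  sInf {a | ∃ δ > (0:ℝ), a = sSup ((fun q : ℝ × ℝ × Euc N => u q.1 q.2.1 q.2.2) ''
    {q | 0 < q.1 ∧ q.1 < δ ∧ |q.2.1 - t| < δ ∧ dist q.2.2 x < δ})}

/-- Lower relaxed semi-limit `liminf* u^ε`. -/
def relaxInf {N : ℕ} (u : ℝ → ℝ → Euc N → ℝ) (t : ℝ) (x : Euc N) : ℝ :=
  sSup {a | ∃ δ > (0:ℝ), a = sInf ((fun q : ℝ × ℝ × Euc N => u q.1 q.2.1 q.2.2) ''
    {q | 0 < q.1 ∧ q.1 < δ ∧ |q.2.1 - t| < δ ∧ dist q.2.2 x < δ})}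

namespace ConsistencyAux

variable {N : ℕ}

lemma sqrt_pos_of_pos {ε : ℝ} (h0 : 0 < ε) : 0 < Real.sqrt ε := Real.sqrt_pos.2 h0

lemma rpow_half_eq {ε : ℝ} : ε ^ ((1:ℝ)/2) = Real.sqrt ε := (Real.sqrt_eq_rpow ε).symm

lemma self_le_sqrt {ε : ℝ} (h0 : 0 ≤ ε) (h1 : ε ≤ 1) : ε ≤ Real.sqrt ε := by
  nlinarith [Real.sq_sqrt h0, Real.sqrt_nonneg ε, Real.sqrt_le_sqrt h1, Real.sqrt_one]

lemma sq_le_sqrt' {ε : ℝ} (h0 : 0 ≤ ε) (h1 : ε ≤ 1) : ε ^ 2 ≤ Real.sqrt ε := by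
  have h2 : ε ^ 2 ≤ ε := by nlinarith
  exact h2.trans (self_le_sqrt h0 h1)

lemma cutC_pos {ε : ℝ} (h0 : 0 < ε) (s : ℝ) : 0 < cutC ε s :=
  lt_min (lt_of_lt_of_le (Real.rpow_pos_of_pos h0 _) (le_max_right _ _))
    (Real.rpow_pos_of_pos h0 _)

lemma cutC_le_sqrt {ε : ℝ} (s : ℝ) : cutC ε s ≤ Real.sqrt ε := by
  rw [← rpow_half_eq]; exact min_le_right _ _

lemma min_le_cutC {ε : ℝ} (s : ℝ) : min s (Real.sqrt ε) ≤ cutC ε s := by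
  rw [← rpow_half_eq]; exact min_le_min (le_max_left _ _) le_rfl

lemma TPe_pos {v : Euc N → ℝ} {ε : ℝ} (h0 : 0 < ε) (x x' : Euc N) : 0 < TPe v ε x x' := by
  unfold TPe; split
  · exact cutC_pos h0 _
  · positivity

lemma TCe_pos {v : Euc N → ℝ} {ε : ℝ} (h0 : 0 < ε) (x x' : Euc N) : 0 < TCe v ε x x' := by
  unfold TCe; split
  · exact cutC_pos h0 _
  · positivity

lemma TPe_le_sqrt {v : Euc N → ℝ} {ε : ℝ} (h0 : 0 < ε) (h1 : ε ≤ 1) (x x' : Euc N) :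
    TPe v ε x x' ≤ Real.sqrt ε := by
  unfold TPe; split
  · exact cutC_le_sqrt _
  · exact sq_le_sqrt' h0.le h1

lemma TCe_le_sqrt {v : Euc N → ℝ} {ε : ℝ} (h0 : 0 < ε) (h1 : ε ≤ 1) (x x' : Euc N) :
    TCe v ε x x' ≤ Real.sqrt ε := by
  unfold TCe; split
  · exact cutC_le_sqrt _
  · exact sq_le_sqrt' h0.le h1

lemma Eplus_nonempty (v : Euc N → ℝ) (ε : ℝ) (x : Euc N) : (Eplus v ε x).Nonempty := by
  unfold Eplus; split
  · assumption
  · exact Set.singleton_nonempty x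

lemma Eminus_nonempty (v : Euc N → ℝ) (ε : ℝ) (x : Euc N) : (Eminus v ε x).Nonempty := by
  unfold Eminus; split
  · assumption
  · exact Set.singleton_nonempty x

lemma dist_of_mem_Eplus {v : Euc N → ℝ} {ε : ℝ} (h0 : 0 < ε) {x y : Euc N}
    (hy : y ∈ Eplus v ε x) : dist y x < ε := by
  unfold Eplus at hy; split at hy
  · exact mem_ball.1 hy.1
  · simp only [Set.mem_singleton_iff] at hy; simp [hy, h0]

lemma dist_of_mem_Eminus {v : Euc N → ℝ} {ε : ℝ} (h0 : 0 < ε) {x y : Euc N}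
    (hy : y ∈ Eminus v ε x) : dist y x < ε := by
  unfold Eminus at hy; split at hy
  · exact mem_ball.1 hy.1
  · simp only [Set.mem_singleton_iff] at hy; simp [hy, h0]

/-- Lower bound combinator for `Seik`. -/
lemma Seik_lower {v : Euc N → ℝ} {ε : ℝ} {φ : ℝ → Euc N → ℝ} {t : ℝ} {x : Euc N}
    {c Mb : ℝ} {xP : Euc N} (hxP : xP ∈ Eplus v ε x)
    (hB : ∀ xP' ∈ Eplus v ε x, ∀ xC ∈ Eminus v ε xP',
      |φ (t + TPe v ε x xP' + TCe v ε xP' xC) xC| ≤ Mb)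
    (hc : ∀ xC ∈ Eminus v ε xP, c ≤ φ (t + TPe v ε x xP + TCe v ε xP xC) xC) :
    c ≤ Seik v ε φ t x := by
  have hmem : (fun xP' =>
      sInf ((fun xC => φ (t + TPe v ε x xP' + TCe v ε xP' xC) xC) '' Eminus v ε xP')) xP
      ∈ (fun xP' =>
      sInf ((fun xC => φ (t + TPe v ε x xP' + TCe v ε xP' xC) xC) '' Eminus v ε xP')) ''
      Eplus v ε x := Set.mem_image_of_mem _ hxP
  have h1 : c ≤ sInf ((fun xC => φ (t + TPe v ε x xP + TCe v ε xP xC) xC) '' Eminus v ε xP) := by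
    apply le_csInf ((Eminus_nonempty v ε xP).image _)
    rintro b ⟨xC, hxC, rfl⟩
    exact hc xC hxC
  refine h1.trans (le_csSup ?_ hmem)
  refine ⟨Mb, ?_⟩
  rintro b ⟨xP', hxP', rfl⟩
  obtain ⟨xC, hxC⟩ := Eminus_nonempty v ε xP'
  refine csInf_le_of_le ⟨-Mb, ?_⟩ (Set.mem_image_of_mem _ hxC)
    (le_of_abs_le (hB xP' hxP' xC hxC))
  rintro b ⟨xC', hxC', rfl⟩
  exact neg_le_of_abs_le (hB xP' hxP' xC' hxC')

/-- Upper bound combinator for `Seik`. -/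
lemma Seik_upper {v : Euc N → ℝ} {ε : ℝ} {φ : ℝ → Euc N → ℝ} {t : ℝ} {x : Euc N}
    {c Mb : ℝ}
    (hB : ∀ xP' ∈ Eplus v ε x, ∀ xC ∈ Eminus v ε xP',
      |φ (t + TPe v ε x xP' + TCe v ε xP' xC) xC| ≤ Mb)
    (hc : ∀ xP ∈ Eplus v ε x, ∃ xC ∈ Eminus v ε xP,
      φ (t + TPe v ε x xP + TCe v ε xP xC) xC ≤ c) :
    Seik v ε φ t x ≤ c := by
  apply csSup_le ((Eplus_nonempty v ε x).image _)
  rintro b ⟨xP, hxP, rfl⟩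
  obtain ⟨xC, hxC, hle⟩ := hc xP hxP
  refine csInf_le_of_le ⟨-Mb, ?_⟩ (Set.mem_image_of_mem _ hxC) hle
  rintro b ⟨xC', hxC', rfl⟩
  exact neg_le_of_abs_le (hB xP hxP xC' hxC')

end ConsistencyAux
namespace ConsistencyAux

variable {N : ℕ}

/-- Taylor / mean-value estimate for `φ` near `(t₀, x₀)`. -/
lemma taylor {T : ℝ} (hT : 0 < T) {φ : ℝ → Euc N → ℝ}
    (hφ : ContDiffOn ℝ 1 (fun p : ℝ × Euc N => φ p.1 p.2) (Ioc (0:ℝ) T ×ˢ univ))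
    {t₀ : ℝ} (x₀ : Euc N) (ht₀ : t₀ ∈ Ioo (0:ℝ) T) {δ : ℝ} (hδ : 0 < δ) :
    ∃ ρ > 0, ρ ≤ t₀ / 2 ∧ ρ ≤ (T - t₀) / 2 ∧
      ∀ p q : ℝ × Euc N, dist p (t₀, x₀) ≤ ρ → dist q (t₀, x₀) ≤ ρ →
        |φ q.1 q.2 - φ p.1 p.2 -
          ((q.1 - p.1) * (deriv (fun s => φ s x₀) t₀)
            + ⟪gradient (φ t₀) x₀, q.2 - p.2⟫)|
          ≤ δ * (|q.1 - p.1| + ‖q.2 - p.2‖) := by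
  set Φ : ℝ × Euc N → ℝ := fun p => φ p.1 p.2 with hΦdef
  set O : Set (ℝ × Euc N) := Ioo (0:ℝ) T ×ˢ univ with hOdef
  have hO : IsOpen O := isOpen_Ioo.prod isOpen_univ
  have hsub : O ⊆ Ioc (0:ℝ) T ×ˢ univ := by
    rintro ⟨s, y⟩ ⟨hs, -⟩; exact ⟨⟨hs.1, hs.2.le⟩, mem_univ _⟩
  have hΦ : ContDiffOn ℝ 1 Φ O := hφ.mono hsub
  have hp₀ : (t₀, x₀) ∈ O := ⟨ht₀, mem_univ _⟩
  have hdiff : ∀ z ∈ O, DifferentiableAt ℝ Φ z := fun z hz =>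
    (hΦ.contDiffAt (hO.mem_nhds hz)).differentiableAt one_ne_zero
  set D₀ : ℝ × Euc N →L[ℝ] ℝ := fderiv ℝ Φ (t₀, x₀) with hD₀def
  have hcont : ContinuousOn (fun z => fderiv ℝ Φ z) O :=
    hΦ.continuousOn_fderiv_of_isOpen hO le_rfl
  have hca : ContinuousAt (fun z => fderiv ℝ Φ z) (t₀, x₀) :=
    hcont.continuousAt (hO.mem_nhds hp₀)
  have h1 : ∀ᶠ z in 𝓝 (t₀, x₀), fderiv ℝ Φ z ∈ Metric.closedBall D₀ δ :=
    hca (Metric.closedBall_mem_nhds D₀ hδ)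
  have h2 : ∀ᶠ z in 𝓝 (t₀, x₀), z ∈ O := hO.mem_nhds hp₀
  obtain ⟨ρ₁, hρ₁pos, hρ₁⟩ := Metric.nhds_basis_closedBall.mem_iff.1 (h1.and h2)
  set ρ := min ρ₁ (min (t₀ / 2) ((T - t₀) / 2)) with hρdef
  have hρpos : 0 < ρ := lt_min hρ₁pos (lt_min (by linarith [ht₀.1]) (by linarith [ht₀.2]))
  refine ⟨ρ, hρpos, (min_le_right _ _).trans (min_le_left _ _),
    (min_le_right _ _).trans (min_le_right _ _), ?_⟩
  intro p q hp hq
  have hball : Metric.closedBall (t₀, x₀) ρ ⊆ Metric.closedBall (t₀, x₀) ρ₁ :=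
    Metric.closedBall_subset_closedBall (min_le_left _ _)
  have hkey : ∀ z ∈ Metric.closedBall ((t₀ : ℝ), x₀) ρ,
      HasFDerivWithinAt Φ (fderiv ℝ Φ z) (Metric.closedBall (t₀, x₀) ρ) z := by
    intro z hz
    exact ((hdiff z (hρ₁ (hball hz)).2).hasFDerivAt).hasFDerivWithinAt
  have hbound : ∀ z ∈ Metric.closedBall ((t₀ : ℝ), x₀) ρ, ‖fderiv ℝ Φ z - D₀‖ ≤ δ := by
    intro z hz
    have := (hρ₁ (hball hz)).1
    rwa [Metric.mem_closedBall, dist_eq_norm] at this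
  have hmv := (convex_closedBall ((t₀ : ℝ), x₀) ρ).norm_image_sub_le_of_norm_hasFDerivWithin_le'
    hkey hbound (Metric.mem_closedBall.2 hp) (Metric.mem_closedBall.2 hq)
  -- identify D₀ (q - p)
  have hDat : HasFDerivAt Φ D₀ (t₀, x₀) := (hdiff _ hp₀).hasFDerivAt
  have hderiv : HasDerivAt (fun s => φ s x₀) (D₀ (1, 0)) t₀ := by
    have h := hDat.comp_hasDerivAt t₀ ((hasDerivAt_id t₀).prodMk (hasDerivAt_const t₀ x₀))
    exact h
  have hgrad : ∀ w : Euc N, ⟪gradient (φ t₀) x₀, w⟫ = D₀ (0, w) := by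
    intro w
    have hfd : HasFDerivAt (φ t₀) (D₀.comp (ContinuousLinearMap.inr ℝ ℝ (Euc N))) x₀ := by
      have h := hDat.comp x₀ (hasFDerivAt_prodMk_right t₀ x₀)
      exact h
    have : gradient (φ t₀) x₀ =
        (InnerProductSpace.toDual ℝ (Euc N)).symm (fderiv ℝ (φ t₀) x₀) := rfl
    rw [this, hfd.fderiv, InnerProductSpace.toDual_symm_apply]
    rfl
  have hlin : D₀ (q - p) = (q.1 - p.1) * (deriv (fun s => φ s x₀) t₀)
      + ⟪gradient (φ t₀) x₀, q.2 - p.2⟫ := by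
    rw [hderiv.deriv, hgrad]
    have hqp : q - p = ((q.1 - p.1 : ℝ), q.2 - p.2) := rfl
    rw [hqp]
    have : ((q.1 - p.1 : ℝ), q.2 - p.2) = (q.1 - p.1) • ((1:ℝ), (0 : Euc N))
        + ((0:ℝ), q.2 - p.2) := by
      simp [Prod.ext_iff]
    rw [this, map_add, D₀.map_smul]
    simp [smul_eq_mul]
  have hnorm : ‖q - p‖ ≤ |q.1 - p.1| + ‖q.2 - p.2‖ := by
    have : ‖q - p‖ = max ‖q.1 - p.1‖ ‖q.2 - p.2‖ := by
      rw [Prod.norm_def]; rfl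
    rw [this]
    exact max_le ((Real.norm_eq_abs _).le.trans (le_add_of_nonneg_right (norm_nonneg _)))
      (le_add_of_nonneg_left (abs_nonneg _))
  calc |φ q.1 q.2 - φ p.1 p.2 - ((q.1 - p.1) * (deriv (fun s => φ s x₀) t₀)
        + ⟪gradient (φ t₀) x₀, q.2 - p.2⟫)|
      = ‖Φ q - Φ p - D₀ (q - p)‖ := by rw [hlin]; rfl
    _ ≤ δ * ‖q - p‖ := hmv
    _ ≤ δ * (|q.1 - p.1| + ‖q.2 - p.2‖) := by
        exact mul_le_mul_of_nonneg_left hnorm hδ.le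

end ConsistencyAux
namespace ConsistencyAux

variable {N : ℕ}

lemma cutC_eq {ε s : ℝ} (h0 : 0 < ε) (h1 : ε * Real.sqrt ε ≤ s) (h2 : s ≤ Real.sqrt ε) :
    cutC ε s = s := by
  have h32 : ε ^ ((3:ℝ)/2) = ε * Real.sqrt ε := by
    rw [show (3:ℝ)/2 = 1 + 1/2 by norm_num, Real.rpow_add h0, Real.rpow_one, rpow_half_eq]
  unfold cutC
  rw [h32, rpow_half_eq, max_eq_left h1, min_eq_left h2]

lemma pick_dir (g : Euc N) (x : Euc N) {s : ℝ} (hs : 0 ≤ s) :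
    ∃ y : Euc N, dist y x ≤ s ∧ ⟪g, y - x⟫ = s * ‖g‖ := by
  by_cases hg : g = 0
  · exact ⟨x, by simp [hs], by simp [hg]⟩
  · have hng : (0:ℝ) < ‖g‖ := norm_pos_iff.2 hg
    refine ⟨x + (s / ‖g‖) • g, ?_, ?_⟩
    · rw [dist_eq_norm, add_sub_cancel_left, norm_smul, Real.norm_eq_abs,
        abs_of_nonneg (by positivity), div_mul_cancel₀ _ hng.ne']
    · rw [add_sub_cancel_left, real_inner_smul_right, real_inner_self_eq_norm_sq]
      field_simp

lemma pick_dir_neg (g : Euc N) (x : Euc N) {s : ℝ} (hs : 0 ≤ s) :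
    ∃ y : Euc N, dist y x ≤ s ∧ ⟪g, y - x⟫ = -(s * ‖g‖) := by
  obtain ⟨y, h1, h2⟩ := pick_dir (-g) x hs
  refine ⟨y, h1, ?_⟩
  rw [inner_neg_left, norm_neg] at h2
  linarith

lemma inner_ge_neg_norm (g w : Euc N) : -(‖g‖ * ‖w‖) ≤ ⟪g, w⟫ :=
  neg_le_of_abs_le (abs_real_inner_le_norm g w)

lemma inner_le_norm' (g w : Euc N) : ⟪g, w⟫ ≤ ‖g‖ * ‖w‖ :=
  le_of_abs_le (abs_real_inner_le_norm g w)

/-- Generic smallness provider. -/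
lemma smallness {Λ ρ c₁ c₂ c₃ : ℝ} (hΛ : 0 < Λ) (hρ : 0 < ρ) (h₁ : 0 < c₁) (h₂ : 0 < c₂)
    (h₃ : 0 < c₃) :
    ∃ ε₀ > (0:ℝ), ∃ r₀ > (0:ℝ), ∀ ε ∈ Ioo (0:ℝ) ε₀, ∀ r ∈ Ioo (0:ℝ) r₀,
      ε ≤ 1 ∧ Λ * (r + 2*ε) ≤ c₁ ∧ Real.sqrt ε ≤ c₂ ∧ ε ≤ c₃ ∧
        r + 2*Real.sqrt ε + 2*ε ≤ ρ := by
  refine ⟨min 1 (min (c₂^2) (min c₃ (min ((ρ/8)^2) (min (ρ/8) (c₁/(8*Λ)))))), by positivity,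
    min (c₁/(4*Λ)) (ρ/4), by positivity, ?_⟩
  rintro ε ⟨hε0, hε1⟩ r ⟨hr0, hr1⟩
  have e1 : ε ≤ 1 := le_of_lt (lt_of_lt_of_le hε1 (min_le_left _ _))
  have e2 : ε ≤ c₂^2 := le_of_lt (lt_of_lt_of_le hε1 ((min_le_right _ _).trans (min_le_left _ _)))
  have e3 : ε ≤ c₃ := le_of_lt (lt_of_lt_of_le hε1
    ((min_le_right _ _).trans ((min_le_right _ _).trans (min_le_left _ _))))
  have e4 : ε ≤ (ρ/8)^2 := le_of_lt (lt_of_lt_of_le hε1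
    ((min_le_right _ _).trans ((min_le_right _ _).trans ((min_le_right _ _).trans
      (min_le_left _ _)))))
  have e5 : ε ≤ ρ/8 := le_of_lt (lt_of_lt_of_le hε1
    ((min_le_right _ _).trans ((min_le_right _ _).trans ((min_le_right _ _).trans
      ((min_le_right _ _).trans (min_le_left _ _))))))
  have e6 : ε ≤ c₁/(8*Λ) := le_of_lt (lt_of_lt_of_le hε1
    ((min_le_right _ _).trans ((min_le_right _ _).trans ((min_le_right _ _).trans
      ((min_le_right _ _).trans (min_le_right _ _))))))
  have f1 : r ≤ c₁/(4*Λ) := le_of_lt (lt_of_lt_of_le hr1 (min_le_left _ _))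
  have f2 : r ≤ ρ/4 := le_of_lt (lt_of_lt_of_le hr1 (min_le_right _ _))
  have hsq1 : Real.sqrt ε ≤ c₂ := by
    calc Real.sqrt ε ≤ Real.sqrt (c₂^2) := Real.sqrt_le_sqrt e2
    _ = c₂ := Real.sqrt_sq h₂.le
  have hsq2 : Real.sqrt ε ≤ ρ/8 := by
    calc Real.sqrt ε ≤ Real.sqrt ((ρ/8)^2) := Real.sqrt_le_sqrt e4
    _ = ρ/8 := Real.sqrt_sq (by positivity)
  refine ⟨e1, ?_, hsq1, e3, ?_⟩
  · have : Λ * r ≤ c₁/4 := by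
      calc Λ * r ≤ Λ * (c₁/(4*Λ)) := by nlinarith
      _ = c₁/4 := by field_simp
    have h2' : Λ * (2*ε) ≤ c₁/4 := by
      calc Λ * (2*ε) ≤ Λ * (2*(c₁/(8*Λ))) := by nlinarith
      _ = c₁/4 := by field_simp; ring
    nlinarith
  · linarith

/-- Assembly: from strict sign information to the conclusion of the main theorem. -/
lemma assemble {A : ℝ} (D : ℝ → ℝ → Euc N → ℝ) (t₀ : ℝ) (x₀ : Euc N)
    (hsign : ∃ ε₀ > (0:ℝ), ∃ r₀ > (0:ℝ), ∀ ε ∈ Ioo (0:ℝ) ε₀, ∀ r ∈ Ioo (0:ℝ) r₀,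
      ∀ (t : ℝ) (x : Euc N), dist (t, x) (t₀, x₀) < r →
        (0 < A → 0 < D ε t x) ∧ (A < 0 → D ε t x < 0)) :
    ∃ o : ℝ → ℝ → ℝ, (∀ ε r, 0 ≤ o ε r) ∧
      Tendsto (fun p : ℝ × ℝ => o p.1 p.2) (𝓝[Ioi 0 ×ˢ Ioi 0] ((0:ℝ), (0:ℝ))) (𝓝 0) ∧
      ∃ ε₀ > (0:ℝ), ∃ r₀ > (0:ℝ), ∀ ε ∈ Ioo (0:ℝ) ε₀, ∀ r ∈ Ioo (0:ℝ) r₀,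
        ∀ (t : ℝ) (x : Euc N), dist (t, x) (t₀, x₀) < r →
          ∃ m M : ℝ, 0 < m ∧ 0 < M ∧
            m * (A - o ε r) ≤ D ε t x ∧ D ε t x ≤ M * (A + o ε r) := by
  obtain ⟨ε₀, hε₀, r₀, hr₀, hsgn⟩ := hsign
  refine ⟨fun ε r => |ε| + |r|, fun ε r => by positivity, ?_, ε₀, hε₀, r₀, hr₀, ?_⟩
  · have hc : Continuous fun p : ℝ × ℝ => |p.1| + |p.2| :=
      (continuous_fst.abs.add continuous_snd.abs)
    have := hc.tendsto ((0:ℝ), (0:ℝ))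
    simp only [abs_zero, add_zero] at this
    exact this.mono_left nhdsWithin_le_nhds
  · intro ε hε r hr t x hdist
    have he : 0 < |ε| + |r| := by
      have := hε.1; have := hr.1; positivity
    set e := |ε| + |r| with hedef
    set d := D ε t x with hddef
    obtain ⟨hpos, hneg⟩ := hsgn ε hε r hr t x hdist
    rcases lt_trichotomy A 0 with hA | hA | hA
    · have hD : d < 0 := hneg hA
      have h1 : 0 < e - A := by linarith
      have h2 : min (A + e) d < 0 := lt_of_le_of_lt (min_le_right _ _) hD
      refine ⟨(-d)/(e - A), d / min (A + e) d, div_pos (by linarith) h1,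
        div_pos_iff.2 (Or.inr ⟨hD, h2⟩), ?_, ?_⟩
      · have : (-d)/(e - A) * (A - e) = -((-d)/(e-A) * (e - A)) := by ring
        rw [this, div_mul_cancel₀ _ h1.ne']
        linarith
      · have hM : 0 < d / min (A + e) d := div_pos_iff.2 (Or.inr ⟨hD, h2⟩)
        calc d = d / min (A + e) d * min (A + e) d := (div_mul_cancel₀ _ h2.ne).symm
        _ ≤ d / min (A + e) d * (A + e) := by
            exact mul_le_mul_of_nonneg_left (min_le_left _ _) hM.le
    · refine ⟨(|d| + 1)/e, (|d| + 1)/e, by positivity, by positivity, ?_, ?_⟩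
      · rw [hA]
        have : (|d| + 1)/e * (0 - e) = -((|d| + 1)/e * e) := by ring
        rw [this, div_mul_cancel₀ _ he.ne']
        have := neg_abs_le d
        linarith
      · rw [hA]
        have : (|d| + 1)/e * (0 + e) = (|d| + 1)/e * e := by ring
        rw [this, div_mul_cancel₀ _ he.ne']
        have := le_abs_self d
        linarith
    · have hD : 0 < d := hpos hA
      have hmax : 0 < max (A - e) d := lt_of_lt_of_le hD (le_max_right _ _)
      have hAe : 0 < A + e := by linarith
      refine ⟨d / max (A - e) d, (d + 1)/(A + e), div_pos hD hmax,
        div_pos (by linarith) hAe, ?_, ?_⟩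
      · calc d / max (A - e) d * (A - e) ≤ d / max (A - e) d * max (A - e) d :=
            mul_le_mul_of_nonneg_left (le_max_left _ _) (div_pos hD hmax).le
        _ = d := div_mul_cancel₀ _ hmax.ne'
      · rw [div_mul_cancel₀ _ hAe.ne']
        linarith

/-- Distance control for points fed to the Taylor estimate. -/
lemma mem_taylor_ball {t t₀ r τ ε ρ : ℝ} {x x₀ y : Euc N}
    (hd : dist ((t : ℝ), x) (t₀, x₀) < r) (hτ0 : 0 ≤ τ) (hτ2 : τ ≤ 2*Real.sqrt ε)
    (hy : dist y x ≤ 2*ε) (hε : 0 < ε) (hsum : r + 2*Real.sqrt ε + 2*ε ≤ ρ) :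
    dist ((t + τ : ℝ), y) (t₀, x₀) ≤ ρ := by
  rw [Prod.dist_eq] at hd ⊢
  have h1 : dist t t₀ < r := lt_of_le_of_lt (le_max_left _ _) hd
  have h2 : dist x x₀ < r := lt_of_le_of_lt (le_max_right _ _) hd
  rw [Real.dist_eq] at h1
  have h3 : dist (t + τ) t₀ ≤ ρ := by
    rw [Real.dist_eq]
    have : |t + τ - t₀| ≤ |t - t₀| + τ := by
      rw [abs_le]; constructor <;> cases abs_le.1 (le_refl |t - t₀|) <;>
        [skip; skip] <;> nlinarith [abs_nonneg (t - t₀), le_abs_self (t - t₀),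
          neg_abs_le (t - t₀)]
    linarith
  have h4 : dist y x₀ ≤ ρ := by
    calc dist y x₀ ≤ dist y x + dist x x₀ := dist_triangle _ _ _
    _ ≤ 2*ε + r := by linarith
    _ ≤ ρ := by nlinarith [Real.sqrt_nonneg ε]
  exact max_le h3 h4

/-- Lipschitz estimate near `x₀`. -/
lemma lip_est {L : NNReal} {v : Euc N → ℝ} (hL : LipschitzWith L v) {t t₀ r ε : ℝ}
    {x x₀ y : Euc N} (hd : dist ((t : ℝ), x) (t₀, x₀) < r) (hy : dist y x ≤ 2*ε) :
    |v y - v x₀| ≤ ((L : ℝ) + 1) * (r + 2*ε) := by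
  have hdd : dist x x₀ ≤ dist ((t : ℝ), x) (t₀, x₀) := by
    rw [Prod.dist_eq]; exact le_max_right _ _
  have h2 : dist x x₀ < r := lt_of_le_of_lt hdd hd
  have h3 : dist y x₀ ≤ 2*ε + r := by
    calc dist y x₀ ≤ dist y x + dist x x₀ := dist_triangle _ _ _
    _ ≤ 2*ε + r := by linarith
  have h4 := hL.dist_le_mul y x₀
  rw [Real.dist_eq] at h4
  have hr : 0 ≤ r := le_trans dist_nonneg h2.le
  have hε : 0 ≤ ε := by nlinarith [@dist_nonneg _ _ y x]
  nlinarith [@dist_nonneg _ _ y x₀, L.coe_nonneg]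

/-- Boundedness hypothesis for the `Seik` combinators. -/
lemma hB_all {v : Euc N → ℝ} {ε T t Mb : ℝ} {φ : ℝ → Euc N → ℝ} {x : Euc N}
    (hMb : ∀ s ∈ Ioc (0:ℝ) T, ∀ y, |φ s y| ≤ Mb)
    (h0ε : 0 < ε) (hε1 : ε ≤ 1) (ht1 : 0 < t) (ht2 : t + 2*Real.sqrt ε ≤ T) :
    ∀ xP ∈ Eplus v ε x, ∀ xC ∈ Eminus v ε xP,
      |φ (t + TPe v ε x xP + TCe v ε xP xC) xC| ≤ Mb := by
  intro xP _ xC _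
  apply hMb
  constructor
  · have := TPe_pos (v := v) h0ε x xP
    have := TCe_pos (v := v) h0ε xP xC
    linarith
  · have := TPe_le_sqrt (v := v) h0ε hε1 x xP
    have := TCe_le_sqrt (v := v) h0ε hε1 xP xC
    linarith

end ConsistencyAux
namespace ConsistencyAux

variable {N : ℕ}

set_option maxHeartbeats 1600000 in
lemma caseI {T : ℝ} (hT : 0 < T) {v : Euc N → ℝ} {L : NNReal} (hL : LipschitzWith L v)
    {φ : ℝ → Euc N → ℝ}
    (hφ : ContDiffOn ℝ 1 (fun p : ℝ × Euc N => φ p.1 p.2) (Ioc (0:ℝ) T ×ˢ univ))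
    {Mb : ℝ} (hMb : ∀ s ∈ Ioc (0:ℝ) T, ∀ y, |φ s y| ≤ Mb)
    {t₀ : ℝ} {x₀ : Euc N} (ht₀ : t₀ ∈ Ioo (0:ℝ) T) (hV : 0 < v x₀) :
    ∃ ε₀ > (0:ℝ), ∃ r₀ > (0:ℝ), ∀ ε ∈ Ioo (0:ℝ) ε₀, ∀ r ∈ Ioo (0:ℝ) r₀,
      ∀ (t : ℝ) (x : Euc N), dist ((t : ℝ), x) (t₀, x₀) < r →
        (0 < deriv (fun s => φ s x₀) t₀ + v x₀ * ‖gradient (φ t₀) x₀‖ →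
          0 < Seik v ε φ t x - φ t x) ∧
        (deriv (fun s => φ s x₀) t₀ + v x₀ * ‖gradient (φ t₀) x₀‖ < 0 →
          Seik v ε φ t x - φ t x < 0) := by
  set a := deriv (fun s => φ s x₀) t₀ with hadef
  set g := gradient (φ t₀) x₀ with hgdef
  set G := ‖g‖ with hGdef
  set V := v x₀ with hVdef
  set A := a + V * G with hAdef
  have hG : 0 ≤ G := norm_nonneg g
  set Λ : ℝ := (L : ℝ) + 1 with hΛdef
  have hΛ : 0 < Λ := by positivity
  have hAeq : A = a + V * G := hAdef
  clear_value a g G V A Λ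
  rcases lt_trichotomy A 0 with hA | hA | hA
  rotate_left
  · -- A = 0 : vacuous
    refine ⟨1, one_pos, 1, one_pos, fun ε _ r _ t x _ => ⟨fun h => ?_, fun h => ?_⟩⟩ <;>
      rw [hA] at h <;> exact absurd h (lt_irrefl 0)
  · -- A > 0
    set δ := A/(10*(1+3*V)) with hδdef0
    have hδ : 0 < δ := by positivity
    obtain ⟨ρ, hρ0, hρt, hρT, htay⟩ := taylor hT hφ x₀ ht₀ hδ
    set η := min (1/2 : ℝ) (A/(15*V*(G+1))) with hηdef
    have hη0 : 0 < η := lt_min one_half_pos (by positivity)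
    have hη1 : η ≤ 1/2 := min_le_left _ _
    have hη2 : η*(15*V*(G+1)) ≤ A := by
      have h := min_le_right (1/2 : ℝ) (A/(15*V*(G+1)))
      calc η*(15*V*(G+1)) ≤ (A/(15*V*(G+1)))*(15*V*(G+1)) := by
            apply mul_le_mul_of_nonneg_right h (by positivity)
      _ = A := div_mul_cancel₀ _ (by positivity)
    clear_value δ η
    obtain ⟨ε₀, hε₀, r₀, hr₀, hsmall⟩ := smallness hΛ hρ0
      (lt_min (by positivity : (0:ℝ) < V/2) (by positivity : (0:ℝ) < A/(10*(G+1))))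
      (lt_min (by positivity : (0:ℝ) < V/2) (by positivity : (0:ℝ) < 1/(2*V)))
      (by positivity : (0:ℝ) < A/(15*V*(|a|+1)))
    refine ⟨ε₀, hε₀, r₀, hr₀, ?_⟩
    intro ε hε r hr t x hdist
    refine ⟨fun _ => ?_, fun h => absurd h (not_lt.2 hA.le)⟩
    obtain ⟨hε1, hwc, hsqc, hεc, hsum⟩ := hsmall ε hε r hr
    have hε0 : 0 < ε := hε.1
    set w := Λ*(r+2*ε) with hwdef
    have hw0 : 0 ≤ w := by
      rw [hwdef]; exact mul_nonneg hΛ.le (by linarith only [hr.1, hε.1])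
    have hw1 : w ≤ V/2 := le_trans hwc (min_le_left _ _)
    have hw2 : w*(10*(G+1)) ≤ A := by
      have h := le_trans hwc (min_le_right _ _)
      calc w*(10*(G+1)) ≤ (A/(10*(G+1)))*(10*(G+1)) :=
            mul_le_mul_of_nonneg_right h (by positivity)
      _ = A := div_mul_cancel₀ _ (by positivity)
    have hsq1 : Real.sqrt ε ≤ V/2 := le_trans hsqc (min_le_left _ _)
    have hsq2 : Real.sqrt ε ≤ 1/(2*V) := le_trans hsqc (min_le_right _ _)
    have hεc' : ε*(15*V*(|a|+1)) ≤ A := by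
      calc ε*(15*V*(|a|+1)) ≤ (A/(15*V*(|a|+1)))*(15*V*(|a|+1)) :=
            mul_le_mul_of_nonneg_right hεc (by positivity)
      _ = A := div_mul_cancel₀ _ (by positivity)
    -- region facts
    have hvy : ∀ y : Euc N, dist y x ≤ 2*ε → V/2 ≤ v y ∧ v y ≤ 3*V/2 := by
      intro y hy
      have h0 := lip_est hL hdist hy
      have h0' : |v y - V| ≤ w := by rw [hwdef, hΛdef, hVdef]; exact h0
      have h' := abs_le.1 h0'
      constructor <;> linarith only [h'.1, h'.2, hw1]
    have hball : ∀ y : Euc N, y ∈ ball x ε → 0 < v y := by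
      intro y hy
      have := (hvy y (le_trans (mem_ball.1 hy).le (by linarith only [hε0]))).1
      linarith only [this, hV]
    have hne : (ball x ε ∩ {y | 0 < v y}).Nonempty :=
      ⟨x, mem_ball_self hε0, hball x (mem_ball_self hε0)⟩
    have hEp : Eplus v ε x = ball x ε := by
      unfold Eplus
      rw [if_pos hne]
      exact Set.inter_eq_left.2 (fun y hy => hball y hy)
    have hEmempty : ∀ xP ∈ ball x ε, ¬ (ball xP ε ∩ {y | v y < 0}).Nonempty := by
      rintro xP hxP ⟨y, hy1, hy2⟩
      have hd : dist y x ≤ 2*ε := by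
        calc dist y x ≤ dist y xP + dist xP x := dist_triangle _ _ _
        _ ≤ 2*ε := by
            have u1 := mem_ball.1 hy1; have u2 := mem_ball.1 hxP
            linarith only [u1, u2]
      have := (hvy y hd).1
      exact absurd hy2 (by simp only [Set.mem_setOf_eq, not_lt]; linarith only [this, hV])
    have hEm : ∀ xP ∈ ball x ε, Eminus v ε xP = {xP} := by
      intro xP hxP; unfold Eminus; rw [if_neg (hEmempty xP hxP)]
    have hTC : ∀ xP ∈ ball x ε, ∀ xC, TCe v ε xP xC = ε^2 := by
      intro xP hxP xC; unfold TCe; rw [if_neg (hEmempty xP hxP)]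
    have hTP : ∀ xP ∈ ball x ε, TPe v ε x xP = ε / v xP := by
      intro xP hxP
      have hd : dist xP x ≤ 2*ε := le_trans (mem_ball.1 hxP).le (by linarith only [hε0])
      obtain ⟨hv1, hv2⟩ := hvy xP hd
      have hvpos : 0 < v xP := by linarith only [hv1, hV]
      unfold TPe
      rw [if_pos hne, max_eq_left hvpos.le]
      apply cutC_eq hε0
      · rw [le_div_iff₀ hvpos]
        have h1 : Real.sqrt ε * v xP ≤ 1 := by
          have hc : (1/(2*V)) * (3*V/2) = 3/4 := by field_simp; ring
          calc Real.sqrt ε * v xP ≤ (1/(2*V)) * (3*V/2) := by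
                apply mul_le_mul hsq2 hv2 (by linarith only [hsq1, hv1, hV])
                  (le_of_lt (by apply div_pos one_pos; linarith only [hV]))
          _ ≤ 1 := by rw [hc]; norm_num
        linarith only [mul_le_mul_of_nonneg_left h1 hε0.le]
      · rw [div_le_iff₀ hvpos]
        calc ε = Real.sqrt ε * Real.sqrt ε := (Real.mul_self_sqrt hε0.le).symm
        _ ≤ Real.sqrt ε * v xP := by
            apply mul_le_mul_of_nonneg_left (by linarith only [hsq1, hv1]) (Real.sqrt_nonneg ε)
    -- time facts
    have hrρ : r ≤ ρ := by linarith only [hsum, Real.sqrt_nonneg ε, hε0]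
    have htt : |t - t₀| < r := by
      rw [Prod.dist_eq] at hdist
      have := lt_of_le_of_lt (le_max_left _ _) hdist
      rwa [Real.dist_eq] at this
    have htpos : 0 < t := by
      have h1 := abs_le.1 htt.le
      linarith only [h1.1, hrρ, hρt, ht₀.1]
    have ht2 : t + 2*Real.sqrt ε ≤ T := by
      have h1 := abs_le.1 htt.le
      linarith only [h1.2, hsum, hρT, ht₀.2, hε0]
    have hB := hB_all (v := v) (x := x) hMb hε0 hε1 htpos ht2
    -- Paul's choice
    have hsP : (0:ℝ) ≤ (1-η)*ε := mul_nonneg (by linarith only [hη1]) hε0.le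
    obtain ⟨xP, hxPd, hxPi⟩ := pick_dir g x hsP
    have hxPball : xP ∈ ball x ε := by
      rw [mem_ball]
      calc dist xP x ≤ (1-η)*ε := hxPd
      _ < ε := by linarith only [mul_pos hη0 hε0]
    have hxPmem : xP ∈ Eplus v ε x := by rw [hEp]; exact hxPball
    -- main estimate
    have hd2 : dist xP x ≤ 2*ε := le_trans hxPd (by linarith only [mul_nonneg hη0.le hε0.le, hε0])
    obtain ⟨hv1, hv2⟩ := hvy xP hd2
    have hvpos : 0 < v xP := by linarith only [hv1, hV]
    set P := v xP with hPdef
    have hPd := abs_le.1 (show |v xP - V| ≤ w by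
      rw [hwdef, hΛdef, hVdef]; exact lip_est hL hdist hd2)
    have key : A*P ≤ 5*V*(a + ε*P*a + (1-η)*G*P - δ*(1+ε*P+P)) := by
      have hAv : V*A = V*a + V*(V*G) := by rw [hAeq]; ring
      have k1 : A*(P - V) ≤ A*w := mul_le_mul_of_nonneg_left hPd.2 hA.le
      have k11 : A*w ≤ A*(V/2) := mul_le_mul_of_nonneg_left hw1 hA.le
      have k2 : V*G*(V - P) ≤ V*G*w := by
        apply mul_le_mul_of_nonneg_left _ (mul_nonneg hV.le hG)
        linarith only [hPd.1]
      have k3 : V*(η*G*P) ≤ V*(η*G*(3*V/2)) := by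
        apply mul_le_mul_of_nonneg_left _ hV.le
        apply mul_le_mul_of_nonneg_left hv2 (mul_nonneg hη0.le hG)
      have k4 : V*(η*(15*V*(G+1))) ≤ V*A := mul_le_mul_of_nonneg_left hη2 hV.le
      have k5 : V*(ε*P*(-|a|)) ≤ V*(ε*P*a) := by
        apply mul_le_mul_of_nonneg_left _ hV.le
        apply mul_le_mul_of_nonneg_left (neg_abs_le a) (mul_nonneg hε0.le hvpos.le)
      have k6 : V*(ε * |a| * P) ≤ V*(ε * |a| * (3*V/2)) := by
        apply mul_le_mul_of_nonneg_left _ hV.le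
        apply mul_le_mul_of_nonneg_left hv2 (mul_nonneg hε0.le (abs_nonneg a))
      have k7 : V*(ε*(15*V*(|a|+1))) ≤ V*A := mul_le_mul_of_nonneg_left hεc' hV.le
      have k8 : V*(δ*(ε*P)) ≤ V*(δ*P) := by
        apply mul_le_mul_of_nonneg_left _ hV.le
        apply mul_le_mul_of_nonneg_left _ hδ.le
        nlinarith only [hε1, hvpos, hε0, mul_le_mul_of_nonneg_right hε1 hvpos.le]
      have k9 : V*(δ*P) ≤ V*(δ*(3*V/2)) := by
        apply mul_le_mul_of_nonneg_left _ hV.le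
        exact mul_le_mul_of_nonneg_left hv2 hδ.le
      have k10 : (V/2)*(w*(10*(G+1))) ≤ (V/2)*A :=
        mul_le_mul_of_nonneg_left hw2 (by positivity)
      have hδdefv : V*(δ*(10*(1+3*V))) = V*A := by
        rw [hδdef0]; field_simp
      have hVA : 0 < V*A := mul_pos hV hA
      have hVw : 0 ≤ V*w := mul_nonneg hV.le hw0
      have hV2η : 0 ≤ V*(V*η) := mul_nonneg hV.le (mul_nonneg hV.le hη0.le)
      have hV2ε : 0 ≤ V*(V*ε) := mul_nonneg hV.le (mul_nonneg hV.le hε0.le)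
      linarith only [k1, k11, k2, k3, k4, k5, k6, k7, k8, k9, k10, hδdefv, hAv, hVA, hVw, hV2η, hV2ε]
    -- conclude via Seik_lower
    have hτ0 : (0:ℝ) ≤ ε / P + ε^2 := by positivity
    have hτ2 : ε / P + ε^2 ≤ 2*Real.sqrt ε := by
      have h1 : ε / P ≤ Real.sqrt ε := by
        rw [div_le_iff₀ hvpos]
        calc ε = Real.sqrt ε * Real.sqrt ε := (Real.mul_self_sqrt hε0.le).symm
        _ ≤ Real.sqrt ε * P := mul_le_mul_of_nonneg_left
            (by linarith only [hsq1, hv1]) (Real.sqrt_nonneg ε)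
      have h2 : ε^2 ≤ Real.sqrt ε := sq_le_sqrt' hε0.le hε1
      linarith only [h1, h2]
    have hq := mem_taylor_ball hdist hτ0 hτ2 hd2 hε0 hsum
    have hp : dist ((t:ℝ), x) (t₀, x₀) ≤ ρ := le_trans hdist.le hrρ
    have htay' := htay ((t:ℝ), x) ((t + (ε / P + ε^2) : ℝ), xP) hp hq
    simp only [add_sub_cancel_left] at htay'
    rw [← hadef, ← hgdef] at htay'
    have habs := abs_le.1 htay'
    have hnx : ‖xP - x‖ ≤ (1-η)*ε := by rw [← dist_eq_norm]; exact hxPd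
    have hnx2 : ‖xP - x‖ ≤ ε := by linarith only [hnx, mul_nonneg hη0.le hε0.le]
    have hlow : φ (t + (ε / P + ε^2)) xP - φ t x ≥
        (ε / P + ε^2)*a + (1-η)*ε*G - δ*((ε / P + ε^2) + ε) := by
      have h1 : |(ε / P + ε^2)| = ε / P + ε^2 := abs_of_nonneg hτ0
      have h2 := habs.1
      rw [h1] at h2
      have h3 : δ * (ε / P + ε^2 + ‖xP - x‖) ≤ δ*((ε / P + ε^2) + ε) :=
        mul_le_mul_of_nonneg_left (by linarith only [hnx2]) hδ.le
      rw [hxPi, ← hGdef] at h2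
      linarith only [h2, h3]
    have harith : ε*(A/(5*V)) ≤ (ε / P + ε^2)*a + (1-η)*ε*G - δ*((ε / P + ε^2) + ε) := by
      have heq : 5*V*((ε/P + ε^2)*a + (1-η)*ε*G - δ*((ε/P + ε^2)+ε))
          = (ε/P) * (5*V*(a + ε*P*a + (1-η)*G*P - δ*(1+ε*P+P))) := by
        field_simp
      have heq2 : ε*A = (ε/P)*(A*P) := by field_simp
      have hstep : (ε/P)*(A*P) ≤ (ε/P)*(5*V*(a + ε*P*a + (1-η)*G*P - δ*(1+ε*P+P))) :=
        mul_le_mul_of_nonneg_left key (by positivity)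
      have h5V : (0:ℝ) < 5*V := by positivity
      rw [show ε*(A/(5*V)) = (ε*A)/(5*V) by ring, div_le_iff₀ h5V]
      calc ε*A ≤ 5*V*((ε/P + ε^2)*a + (1-η)*ε*G - δ*((ε/P + ε^2)+ε)) := by
            rw [heq2, heq]; exact hstep
      _ = ((ε/P + ε^2)*a + (1-η)*ε*G - δ*((ε/P + ε^2)+ε)) * (5*V) := by ring
    have hfin : φ t x + ε*(A/(5*V)) ≤ Seik v ε φ t x := by
      apply Seik_lower hxPmem hB
      intro xC hxC
      rw [hEm xP hxPball] at hxC
      rw [Set.mem_singleton_iff] at hxC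
      rw [hxC]
      rw [hTC xP hxPball, hTP xP hxPball]
      have : t + ε / v xP + ε^2 = t + (ε / P + ε^2) := by rw [← hPdef]; ring
      rw [this]
      linarith only [hlow, harith]
    have hpos : 0 < ε*(A/(5*V)) :=
      mul_pos hε0 (div_pos hA (by linarith only [hV]))
    linarith only [hfin, hpos]
  · -- A < 0
    set B := -A with hBdef
    have hBdef0 : B = -A := hBdef
    have hB0 : 0 < B := by rw [hBdef0]; linarith only [hA]
    have haneg : a < 0 := by linarith only [hA, hAeq, mul_nonneg hV.le hG]
    set δ := B/(10*(1+3*V)) with hδdef0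
    have hδ : 0 < δ := by positivity
    obtain ⟨ρ, hρ0, hρt, hρT, htay⟩ := taylor hT hφ x₀ ht₀ hδ
    clear_value δ B
    obtain ⟨ε₀, hε₀, r₀, hr₀, hsmall⟩ := smallness hΛ hρ0
      (lt_min (by positivity : (0:ℝ) < V/2) (by positivity : (0:ℝ) < B/(10*(G+1))))
      (lt_min (by positivity : (0:ℝ) < V/2) (by positivity : (0:ℝ) < 1/(2*V)))
      (by positivity : (0:ℝ) < B/(15*V*(|a|+1)))
    refine ⟨ε₀, hε₀, r₀, hr₀, ?_⟩
    intro ε hε r hr t x hdist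
    refine ⟨fun h => absurd h (not_lt.2 hA.le), fun _ => ?_⟩
    obtain ⟨hε1, hwc, hsqc, hεc, hsum⟩ := hsmall ε hε r hr
    have hε0 : 0 < ε := hε.1
    set w := Λ*(r+2*ε) with hwdef
    have hw0 : 0 ≤ w := by
      rw [hwdef]; exact mul_nonneg hΛ.le (by linarith only [hr.1, hε.1])
    have hw1 : w ≤ V/2 := le_trans hwc (min_le_left _ _)
    have hw2 : w*(10*(G+1)) ≤ B := by
      have h := le_trans hwc (min_le_right _ _)
      calc w*(10*(G+1)) ≤ (B/(10*(G+1)))*(10*(G+1)) :=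
            mul_le_mul_of_nonneg_right h (by positivity)
      _ = B := div_mul_cancel₀ _ (by positivity)
    have hsq1 : Real.sqrt ε ≤ V/2 := le_trans hsqc (min_le_left _ _)
    have hsq2 : Real.sqrt ε ≤ 1/(2*V) := le_trans hsqc (min_le_right _ _)
    have hεc' : ε*(15*V*(|a|+1)) ≤ B := by
      calc ε*(15*V*(|a|+1)) ≤ (B/(15*V*(|a|+1)))*(15*V*(|a|+1)) :=
            mul_le_mul_of_nonneg_right hεc (by positivity)
      _ = B := div_mul_cancel₀ _ (by positivity)
    have hvy : ∀ y : Euc N, dist y x ≤ 2*ε → V/2 ≤ v y ∧ v y ≤ 3*V/2 := by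
      intro y hy
      have h0 := lip_est hL hdist hy
      have h0' : |v y - V| ≤ w := by rw [hwdef, hΛdef, hVdef]; exact h0
      have h' := abs_le.1 h0'
      constructor <;> linarith only [h'.1, h'.2, hw1]
    have hball : ∀ y : Euc N, y ∈ ball x ε → 0 < v y := by
      intro y hy
      have := (hvy y (le_trans (mem_ball.1 hy).le (by linarith only [hε0]))).1
      linarith only [this, hV]
    have hne : (ball x ε ∩ {y | 0 < v y}).Nonempty :=
      ⟨x, mem_ball_self hε0, hball x (mem_ball_self hε0)⟩
    have hEp : Eplus v ε x = ball x ε := by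
      unfold Eplus
      rw [if_pos hne]
      exact Set.inter_eq_left.2 (fun y hy => hball y hy)
    have hEmempty : ∀ xP ∈ ball x ε, ¬ (ball xP ε ∩ {y | v y < 0}).Nonempty := by
      rintro xP hxP ⟨y, hy1, hy2⟩
      have hd : dist y x ≤ 2*ε := by
        calc dist y x ≤ dist y xP + dist xP x := dist_triangle _ _ _
        _ ≤ 2*ε := by
            have u1 := mem_ball.1 hy1; have u2 := mem_ball.1 hxP
            linarith only [u1, u2]
      have := (hvy y hd).1
      exact absurd hy2 (by simp only [Set.mem_setOf_eq, not_lt]; linarith only [this, hV])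
    have hEm : ∀ xP ∈ ball x ε, Eminus v ε xP = {xP} := by
      intro xP hxP; unfold Eminus; rw [if_neg (hEmempty xP hxP)]
    have hTC : ∀ xP ∈ ball x ε, ∀ xC, TCe v ε xP xC = ε^2 := by
      intro xP hxP xC; unfold TCe; rw [if_neg (hEmempty xP hxP)]
    have hTP : ∀ xP ∈ ball x ε, TPe v ε x xP = ε / v xP := by
      intro xP hxP
      have hd : dist xP x ≤ 2*ε := le_trans (mem_ball.1 hxP).le (by linarith only [hε0])
      obtain ⟨hv1, hv2⟩ := hvy xP hd
      have hvpos : 0 < v xP := by linarith only [hv1, hV]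
      unfold TPe
      rw [if_pos hne, max_eq_left hvpos.le]
      apply cutC_eq hε0
      · rw [le_div_iff₀ hvpos]
        have h1 : Real.sqrt ε * v xP ≤ 1 := by
          have hc : (1/(2*V)) * (3*V/2) = 3/4 := by field_simp; ring
          calc Real.sqrt ε * v xP ≤ (1/(2*V)) * (3*V/2) := by
                apply mul_le_mul hsq2 hv2 (by linarith only [hsq1, hv1, hV])
                  (le_of_lt (by apply div_pos one_pos; linarith only [hV]))
          _ ≤ 1 := by rw [hc]; norm_num
        linarith only [mul_le_mul_of_nonneg_left h1 hε0.le]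
      · rw [div_le_iff₀ hvpos]
        calc ε = Real.sqrt ε * Real.sqrt ε := (Real.mul_self_sqrt hε0.le).symm
        _ ≤ Real.sqrt ε * v xP := by
            apply mul_le_mul_of_nonneg_left (by linarith only [hsq1, hv1]) (Real.sqrt_nonneg ε)
    have hrρ : r ≤ ρ := by linarith only [hsum, Real.sqrt_nonneg ε, hε0]
    have htt : |t - t₀| < r := by
      rw [Prod.dist_eq] at hdist
      have := lt_of_le_of_lt (le_max_left _ _) hdist
      rwa [Real.dist_eq] at this
    have htpos : 0 < t := by
      have h1 := abs_le.1 htt.le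
      linarith only [h1.1, hrρ, hρt, ht₀.1]
    have ht2 : t + 2*Real.sqrt ε ≤ T := by
      have h1 := abs_le.1 htt.le
      linarith only [h1.2, hsum, hρT, ht₀.2, hε0]
    have hBall := hB_all (v := v) (x := x) hMb hε0 hε1 htpos ht2
    -- upper bound over all xP
    have hfin : Seik v ε φ t x ≤ φ t x + ε*(A/(5*V)) := by
      apply Seik_upper hBall
      intro xP hxP
      have hxPball : xP ∈ ball x ε := hEp ▸ hxP
      refine ⟨xP, by rw [hEm xP hxPball]; exact Set.mem_singleton _, ?_⟩
      rw [hTC xP hxPball, hTP xP hxPball]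
      have hd2 : dist xP x ≤ 2*ε := le_trans (mem_ball.1 hxPball).le (by linarith only [hε0])
      obtain ⟨hv1, hv2⟩ := hvy xP hd2
      have hvpos : 0 < v xP := by linarith only [hv1, hV]
      set P := v xP with hPdef
      have hPd := abs_le.1 (show |v xP - V| ≤ w by
        rw [hwdef, hΛdef, hVdef]; exact lip_est hL hdist hd2)
      have hτ0 : (0:ℝ) ≤ ε / P + ε^2 := by positivity
      have hτ2 : ε / P + ε^2 ≤ 2*Real.sqrt ε := by
        have h1 : ε / P ≤ Real.sqrt ε := by
          rw [div_le_iff₀ hvpos]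
          calc ε = Real.sqrt ε * Real.sqrt ε := (Real.mul_self_sqrt hε0.le).symm
          _ ≤ Real.sqrt ε * P := mul_le_mul_of_nonneg_left
              (by linarith only [hsq1, hv1]) (Real.sqrt_nonneg ε)
        have h2 : ε^2 ≤ Real.sqrt ε := sq_le_sqrt' hε0.le hε1
        linarith only [h1, h2]
      have hq := mem_taylor_ball hdist hτ0 hτ2 hd2 hε0 hsum
      have hp : dist ((t:ℝ), x) (t₀, x₀) ≤ ρ := le_trans hdist.le hrρ
      have htay' := htay ((t:ℝ), x) ((t + (ε / P + ε^2) : ℝ), xP) hp hq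
      simp only [add_sub_cancel_left] at htay'
      rw [← hadef, ← hgdef] at htay'
      have habs := abs_le.1 htay'
      have hnx : ‖xP - x‖ ≤ ε := by
        rw [← dist_eq_norm]; exact (mem_ball.1 hxPball).le
      have hinner : ⟪g, xP - x⟫ ≤ ε*G := by
        calc ⟪g, xP - x⟫ ≤ ‖g‖*‖xP - x‖ := inner_le_norm' g (xP - x)
        _ ≤ G*ε := by rw [← hGdef]; exact mul_le_mul_of_nonneg_left hnx hG
        _ = ε*G := by ring
      have hup : φ (t + (ε / P + ε^2)) xP - φ t x ≤
          (ε / P + ε^2)*a + ε*G + δ*((ε / P + ε^2) + ε) := by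
        have h1 : |(ε / P + ε^2)| = ε / P + ε^2 := abs_of_nonneg hτ0
        have h2 := habs.2
        rw [h1] at h2
        have h3 : δ * (ε / P + ε^2 + ‖xP - x‖) ≤ δ*((ε / P + ε^2) + ε) :=
          mul_le_mul_of_nonneg_left (by linarith only [hnx]) hδ.le
        linarith only [h2, h3, hinner]
      have key : 5*V*(a + ε*P*a + G*P + δ*(1+ε*P+P)) ≤ A*P := by
        have hAv : V*A = V*a + V*(V*G) := by rw [hAeq]; ring
        have k1 : A*(V - P) ≤ B*w := by
          have : A*(V-P) = B*(P-V) := by rw [hBdef0]; ring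
          rw [this]
          exact mul_le_mul_of_nonneg_left hPd.2 hB0.le
        have k2 : V*G*(P - V) ≤ V*G*w :=
          mul_le_mul_of_nonneg_left hPd.2 (mul_nonneg hV.le hG)
        have k5 : V*(ε*P*a) ≤ V*(ε*P*|a|) := by
          apply mul_le_mul_of_nonneg_left _ hV.le
          apply mul_le_mul_of_nonneg_left (le_abs_self a) (mul_nonneg hε0.le hvpos.le)
        have k6 : V*(ε * |a| * P) ≤ V*(ε * |a| * (3*V/2)) := by
          apply mul_le_mul_of_nonneg_left _ hV.le
          apply mul_le_mul_of_nonneg_left hv2 (mul_nonneg hε0.le (abs_nonneg a))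
        have k7 : V*(ε*(15*V*(|a|+1))) ≤ V*B := mul_le_mul_of_nonneg_left hεc' hV.le
        have k8 : V*(δ*(ε*P)) ≤ V*(δ*P) := by
          apply mul_le_mul_of_nonneg_left _ hV.le
          apply mul_le_mul_of_nonneg_left _ hδ.le
          nlinarith only [hε1, hvpos, hε0, mul_le_mul_of_nonneg_right hε1 hvpos.le]
        have k9 : V*(δ*P) ≤ V*(δ*(3*V/2)) := by
          apply mul_le_mul_of_nonneg_left _ hV.le
          exact mul_le_mul_of_nonneg_left hv2 hδ.le
        have k10 : (V/2)*(w*(10*(G+1))) ≤ (V/2)*B :=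
          mul_le_mul_of_nonneg_left hw2 (by positivity)
        have hδdefv : V*(δ*(10*(1+3*V))) = V*B := by
          rw [hδdef0]; field_simp
        have hVB : 0 < V*B := mul_pos hV hB0
        have hVw : 0 ≤ V*w := mul_nonneg hV.le hw0
        have hBw : B*w ≤ B*(V/2) := mul_le_mul_of_nonneg_left hw1 hB0.le
        have hV2ε : 0 ≤ V*(V*ε) := mul_nonneg hV.le (mul_nonneg hV.le hε0.le)
        have hVBA : V*B = -(V*A) := by rw [hBdef0]; ring
        linarith only [k1, k2, k5, k6, k7, k8, k9, k10, hδdefv, hAv, hVB, hVw, hBw, hV2ε, hVBA]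
      have harith : (ε / P + ε^2)*a + ε*G + δ*((ε / P + ε^2) + ε) ≤ ε*(A/(5*V)) := by
        have heq : 5*V*((ε/P + ε^2)*a + ε*G + δ*((ε/P + ε^2)+ε))
            = (ε/P) * (5*V*(a + ε*P*a + G*P + δ*(1+ε*P+P))) := by
          field_simp
        have heq2 : ε*A = (ε/P)*(A*P) := by field_simp
        have hstep : (ε/P)*(5*V*(a + ε*P*a + G*P + δ*(1+ε*P+P))) ≤ (ε/P)*(A*P) :=
          mul_le_mul_of_nonneg_left key (by positivity)
        have h5V : (0:ℝ) < 5*V := by positivity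
        rw [show ε*(A/(5*V)) = (ε*A)/(5*V) by ring, le_div_iff₀ h5V]
        calc ((ε/P + ε^2)*a + ε*G + δ*((ε/P + ε^2)+ε)) * (5*V)
            = (ε/P) * (5*V*(a + ε*P*a + G*P + δ*(1+ε*P+P))) := by rw [← heq]; ring
        _ ≤ (ε/P)*(A*P) := hstep
        _ = ε*A := heq2.symm
      have : t + ε / v xP + ε^2 = t + (ε / P + ε^2) := by rw [← hPdef]; ring
      rw [this]
      linarith only [hup, harith]
    have hneg : ε*(A/(5*V)) < 0 := by
      apply mul_neg_of_pos_of_neg hε0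
      apply div_neg_of_neg_of_pos hA (by linarith only [hV])
    linarith only [hfin, hneg]

end ConsistencyAux
namespace ConsistencyAux

variable {N : ℕ}

set_option maxHeartbeats 1600000 in
lemma caseII {T : ℝ} (hT : 0 < T) {v : Euc N → ℝ} {L : NNReal} (hL : LipschitzWith L v)
    {φ : ℝ → Euc N → ℝ}
    (hφ : ContDiffOn ℝ 1 (fun p : ℝ × Euc N => φ p.1 p.2) (Ioc (0:ℝ) T ×ˢ univ))
    {Mb : ℝ} (hMb : ∀ s ∈ Ioc (0:ℝ) T, ∀ y, |φ s y| ≤ Mb)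
    {t₀ : ℝ} {x₀ : Euc N} (ht₀ : t₀ ∈ Ioo (0:ℝ) T) (hV : v x₀ < 0) :
    ∃ ε₀ > (0:ℝ), ∃ r₀ > (0:ℝ), ∀ ε ∈ Ioo (0:ℝ) ε₀, ∀ r ∈ Ioo (0:ℝ) r₀,
      ∀ (t : ℝ) (x : Euc N), dist ((t : ℝ), x) (t₀, x₀) < r →
        (0 < deriv (fun s => φ s x₀) t₀ + v x₀ * ‖gradient (φ t₀) x₀‖ →
          0 < Seik v ε φ t x - φ t x) ∧
        (deriv (fun s => φ s x₀) t₀ + v x₀ * ‖gradient (φ t₀) x₀‖ < 0 →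
          Seik v ε φ t x - φ t x < 0) := by
  set a := deriv (fun s => φ s x₀) t₀ with hadef
  set g := gradient (φ t₀) x₀ with hgdef
  set G := ‖g‖ with hGdef
  set V := v x₀ with hVdef
  set A := a + V * G with hAdef
  have hG : 0 ≤ G := norm_nonneg g
  set Λ : ℝ := (L : ℝ) + 1 with hΛdef
  have hΛ : 0 < Λ := by positivity
  have hAeq : A = a + V * G := hAdef
  set W := -V with hWdef
  have hWeq : W = -V := hWdef
  have hW : 0 < W := by rw [hWeq]; linarith only [hV]
  have hAeqW : A = a - W * G := by rw [hAeq, hWeq]; ring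
  clear_value a g G V A Λ W
  rcases lt_trichotomy A 0 with hA | hA | hA
  rotate_left
  · refine ⟨1, one_pos, 1, one_pos, fun ε _ r _ t x _ => ⟨fun h => ?_, fun h => ?_⟩⟩ <;>
      rw [hA] at h <;> exact absurd h (lt_irrefl 0)
  · -- A > 0 : lower bound over all xC
    set δ := A/(10*(1+3*W)) with hδdef0
    have hδ : 0 < δ := by positivity
    obtain ⟨ρ, hρ0, hρt, hρT, htay⟩ := taylor hT hφ x₀ ht₀ hδ
    clear_value δ
    obtain ⟨ε₀, hε₀, r₀, hr₀, hsmall⟩ := smallness hΛ hρ0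
      (lt_min (by positivity : (0:ℝ) < W/2) (by positivity : (0:ℝ) < A/(10*(G+1))))
      (lt_min (by positivity : (0:ℝ) < W/2) (by positivity : (0:ℝ) < 1/(2*W)))
      (by positivity : (0:ℝ) < A/(15*W*(|a|+1)))
    refine ⟨ε₀, hε₀, r₀, hr₀, ?_⟩
    intro ε hε r hr t x hdist
    refine ⟨fun _ => ?_, fun h => absurd h (not_lt.2 hA.le)⟩
    obtain ⟨hε1, hwc, hsqc, hεc, hsum⟩ := hsmall ε hε r hr
    have hε0 : 0 < ε := hε.1
    set w := Λ*(r+2*ε) with hwdef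
    have hw0 : 0 ≤ w := by
      rw [hwdef]; exact mul_nonneg hΛ.le (by linarith only [hr.1, hε.1])
    have hw1 : w ≤ W/2 := le_trans hwc (min_le_left _ _)
    have hw2 : w*(10*(G+1)) ≤ A := by
      have h := le_trans hwc (min_le_right _ _)
      calc w*(10*(G+1)) ≤ (A/(10*(G+1)))*(10*(G+1)) :=
            mul_le_mul_of_nonneg_right h (by positivity)
      _ = A := div_mul_cancel₀ _ (by positivity)
    have hsq1 : Real.sqrt ε ≤ W/2 := le_trans hsqc (min_le_left _ _)
    have hsq2 : Real.sqrt ε ≤ 1/(2*W) := le_trans hsqc (min_le_right _ _)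
    have hεc' : ε*(15*W*(|a|+1)) ≤ A := by
      calc ε*(15*W*(|a|+1)) ≤ (A/(15*W*(|a|+1)))*(15*W*(|a|+1)) :=
            mul_le_mul_of_nonneg_right hεc (by positivity)
      _ = A := div_mul_cancel₀ _ (by positivity)
    have hvy : ∀ y : Euc N, dist y x ≤ 2*ε → W/2 ≤ -(v y) ∧ -(v y) ≤ 3*W/2 := by
      intro y hy
      have h0 := lip_est hL hdist hy
      have h0' : |v y - V| ≤ w := by rw [hwdef, hΛdef, hVdef]; exact h0
      have h' := abs_le.1 h0'
      constructor <;> [linarith only [h'.2, hw1, hWeq]; linarith only [h'.1, hw1, hWeq]]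
    have hball : ∀ y : Euc N, y ∈ ball x ε → v y < 0 := by
      intro y hy
      have := (hvy y (le_trans (mem_ball.1 hy).le (by linarith only [hε0]))).1
      linarith only [this, hW]
    have hnoplus : ¬ (ball x ε ∩ {y | 0 < v y}).Nonempty := by
      rintro ⟨y, hy1, hy2⟩
      have := hball y hy1
      exact absurd hy2 (by simp only [Set.mem_setOf_eq, not_lt]; linarith only [this])
    have hEp : Eplus v ε x = {x} := by
      unfold Eplus; rw [if_neg hnoplus]
    have hTP : ∀ x', TPe v ε x x' = ε^2 := by
      intro x'; unfold TPe; rw [if_neg hnoplus]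
    have hne : (ball x ε ∩ {y | v y < 0}).Nonempty :=
      ⟨x, mem_ball_self hε0, hball x (mem_ball_self hε0)⟩
    have hEm : Eminus v ε x = ball x ε := by
      unfold Eminus
      rw [if_pos hne]
      exact Set.inter_eq_left.2 (fun y hy => hball y hy)
    have hTC : ∀ xC ∈ ball x ε, TCe v ε x xC = ε / (-(v xC)) := by
      intro xC hxC
      have hd : dist xC x ≤ 2*ε := le_trans (mem_ball.1 hxC).le (by linarith only [hε0])
      obtain ⟨hv1, hv2⟩ := hvy xC hd
      have hvpos : 0 < -(v xC) := by linarith only [hv1, hW]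
      unfold TCe
      rw [if_pos hne, max_eq_left hvpos.le]
      apply cutC_eq hε0
      · rw [le_div_iff₀ hvpos]
        have h1 : Real.sqrt ε * (-(v xC)) ≤ 1 := by
          have hc : (1/(2*W)) * (3*W/2) = 3/4 := by field_simp; ring
          calc Real.sqrt ε * (-(v xC)) ≤ (1/(2*W)) * (3*W/2) := by
                apply mul_le_mul hsq2 hv2 hvpos.le
                  (le_of_lt (by apply div_pos one_pos; linarith only [hW]))
          _ ≤ 1 := by rw [hc]; norm_num
        linarith only [mul_le_mul_of_nonneg_left h1 hε0.le]
      · rw [div_le_iff₀ hvpos]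
        calc ε = Real.sqrt ε * Real.sqrt ε := (Real.mul_self_sqrt hε0.le).symm
        _ ≤ Real.sqrt ε * (-(v xC)) := mul_le_mul_of_nonneg_left
            (by linarith only [hsq1, hv1]) (Real.sqrt_nonneg ε)
    have hrρ : r ≤ ρ := by linarith only [hsum, Real.sqrt_nonneg ε, hε0]
    have htt : |t - t₀| < r := by
      rw [Prod.dist_eq] at hdist
      have := lt_of_le_of_lt (le_max_left _ _) hdist
      rwa [Real.dist_eq] at this
    have htpos : 0 < t := by
      have h1 := abs_le.1 htt.le
      linarith only [h1.1, hrρ, hρt, ht₀.1]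
    have ht2 : t + 2*Real.sqrt ε ≤ T := by
      have h1 := abs_le.1 htt.le
      linarith only [h1.2, hsum, hρT, ht₀.2, hε0]
    have hBall := hB_all (v := v) (x := x) hMb hε0 hε1 htpos ht2
    have hxPmem : x ∈ Eplus v ε x := by rw [hEp]; exact Set.mem_singleton x
    have hfin : φ t x + ε*(A/(5*W)) ≤ Seik v ε φ t x := by
      apply Seik_lower hxPmem hBall
      intro xC hxC
      rw [hEm] at hxC
      rw [hTP x, hTC xC hxC]
      have hd2 : dist xC x ≤ 2*ε := le_trans (mem_ball.1 hxC).le (by linarith only [hε0])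
      obtain ⟨hv1, hv2⟩ := hvy xC hd2
      have hvpos : 0 < -(v xC) := by linarith only [hv1, hW]
      set P := -(v xC) with hPdef
      have hPd : |P - W| ≤ w := by
        have h0 := lip_est hL hdist hd2
        have h0' : |v xC - V| ≤ w := by rw [hwdef, hΛdef, hVdef]; exact h0
        have h' := abs_le.1 h0'
        rw [abs_le]
        constructor <;> [linarith only [h'.2, hWeq, hPdef]; linarith only [h'.1, hWeq, hPdef]]
      have hPd' := abs_le.1 hPd
      clear_value P
      have hτ0 : (0:ℝ) ≤ ε / P + ε^2 :=
        add_nonneg (div_nonneg hε0.le hvpos.le) (sq_nonneg ε)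
      have hτ2 : ε / P + ε^2 ≤ 2*Real.sqrt ε := by
        have h1 : ε / P ≤ Real.sqrt ε := by
          rw [div_le_iff₀ hvpos]
          calc ε = Real.sqrt ε * Real.sqrt ε := (Real.mul_self_sqrt hε0.le).symm
          _ ≤ Real.sqrt ε * P := mul_le_mul_of_nonneg_left
              (by linarith only [hsq1, hv1]) (Real.sqrt_nonneg ε)
        have h2 : ε^2 ≤ Real.sqrt ε := sq_le_sqrt' hε0.le hε1
        linarith only [h1, h2]
      have hq := mem_taylor_ball hdist hτ0 hτ2 hd2 hε0 hsum
      have hp : dist ((t:ℝ), x) (t₀, x₀) ≤ ρ := le_trans hdist.le hrρ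
      have htay' := htay ((t:ℝ), x) ((t + (ε / P + ε^2) : ℝ), xC) hp hq
      simp only [add_sub_cancel_left] at htay'
      rw [← hadef, ← hgdef] at htay'
      have habs := abs_le.1 htay'
      have hnx : ‖xC - x‖ ≤ ε := by
        rw [← dist_eq_norm]; exact (mem_ball.1 hxC).le
      have hinner : -(ε*G) ≤ ⟪g, xC - x⟫ := by
        have h1 := inner_ge_neg_norm g (xC - x)
        have h2 : ‖g‖*‖xC - x‖ ≤ G*ε := by
          rw [← hGdef]; exact mul_le_mul_of_nonneg_left hnx hG
        have : -(G*ε) ≤ -(‖g‖*‖xC-x‖) := by linarith only [h2]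
        calc -(ε*G) = -(G*ε) := by ring
        _ ≤ -(‖g‖*‖xC-x‖) := this
        _ ≤ ⟪g, xC - x⟫ := h1
      have hlow : φ (t + (ε / P + ε^2)) xC - φ t x ≥
          (ε / P + ε^2)*a - ε*G - δ*((ε / P + ε^2) + ε) := by
        have h1 : |(ε / P + ε^2)| = ε / P + ε^2 := abs_of_nonneg hτ0
        have h2 := habs.1
        rw [h1] at h2
        have h3 : δ * (ε / P + ε^2 + ‖xC - x‖) ≤ δ*((ε / P + ε^2) + ε) :=
          mul_le_mul_of_nonneg_left (by linarith only [hnx]) hδ.le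
        linarith only [h2, h3, hinner]
      have key : A*P ≤ 5*W*(a + ε*P*a - G*P - δ*(1+ε*P+P)) := by
        have hAw : W*A = W*a - W*(W*G) := by rw [hAeqW]; ring
        have k1 : A*(P - W) ≤ A*w := mul_le_mul_of_nonneg_left hPd'.2 hA.le
        have k11 : A*w ≤ A*(W/2) := mul_le_mul_of_nonneg_left hw1 hA.le
        have k2 : W*G*(P - W) ≤ W*G*w :=
          mul_le_mul_of_nonneg_left hPd'.2 (mul_nonneg hW.le hG)
        have k5 : W*(ε*P*(-|a|)) ≤ W*(ε*P*a) := by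
          apply mul_le_mul_of_nonneg_left _ hW.le
          apply mul_le_mul_of_nonneg_left (neg_abs_le a) (mul_nonneg hε0.le hvpos.le)
        have k6 : W*(ε * |a| * P) ≤ W*(ε * |a| * (3*W/2)) := by
          apply mul_le_mul_of_nonneg_left _ hW.le
          apply mul_le_mul_of_nonneg_left hv2 (mul_nonneg hε0.le (abs_nonneg a))
        have k7 : W*(ε*(15*W*(|a|+1))) ≤ W*A := mul_le_mul_of_nonneg_left hεc' hW.le
        have k8 : W*(δ*(ε*P)) ≤ W*(δ*P) := by
          apply mul_le_mul_of_nonneg_left _ hW.le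
          apply mul_le_mul_of_nonneg_left _ hδ.le
          nlinarith only [hε1, hvpos, hε0, mul_le_mul_of_nonneg_right hε1 hvpos.le]
        have k9 : W*(δ*P) ≤ W*(δ*(3*W/2)) := by
          apply mul_le_mul_of_nonneg_left _ hW.le
          exact mul_le_mul_of_nonneg_left hv2 hδ.le
        have k10 : (W/2)*(w*(10*(G+1))) ≤ (W/2)*A :=
          mul_le_mul_of_nonneg_left hw2 (by positivity)
        have hδdefv : W*(δ*(10*(1+3*W))) = W*A := by
          rw [hδdef0]; field_simp
        have hWA : 0 < W*A := mul_pos hW hA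
        have hWw : 0 ≤ W*w := mul_nonneg hW.le hw0
        have hW2η : 0 ≤ W*(W*ε) := mul_nonneg hW.le (mul_nonneg hW.le hε0.le)
        linarith only [k1, k11, k2, k5, k6, k7, k8, k9, k10, hδdefv, hAw, hWA, hWw, hW2η]
      have harith : ε*(A/(5*W)) ≤ (ε / P + ε^2)*a - ε*G - δ*((ε / P + ε^2) + ε) := by
        have heq : 5*W*((ε/P + ε^2)*a - ε*G - δ*((ε/P + ε^2)+ε))
            = (ε/P) * (5*W*(a + ε*P*a - G*P - δ*(1+ε*P+P))) := by
          field_simp [hvpos.ne']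
        have heq2 : ε*A = (ε/P)*(A*P) := by field_simp [hvpos.ne']
        have hstep : (ε/P)*(A*P) ≤ (ε/P)*(5*W*(a + ε*P*a - G*P - δ*(1+ε*P+P))) :=
          mul_le_mul_of_nonneg_left key (by positivity)
        have h5W : (0:ℝ) < 5*W := by positivity
        rw [show ε*(A/(5*W)) = (ε*A)/(5*W) by ring, div_le_iff₀ h5W]
        calc ε*A ≤ 5*W*((ε/P + ε^2)*a - ε*G - δ*((ε/P + ε^2)+ε)) := by
              rw [heq2, heq]; exact hstep
        _ = ((ε/P + ε^2)*a - ε*G - δ*((ε/P + ε^2)+ε)) * (5*W) := by ring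
      have heqt : t + ε^2 + ε / P = t + (ε / P + ε^2) := by ring
      rw [heqt]
      linarith only [hlow, harith]
    have hpos : 0 < ε*(A/(5*W)) :=
      mul_pos hε0 (div_pos hA (by linarith only [hW]))
    linarith only [hfin, hpos]
  · -- A < 0 : Carol can push down
    set B := -A with hBdef
    have hBdef0 : B = -A := hBdef
    have hB0 : 0 < B := by rw [hBdef0]; linarith only [hA]
    set δ := B/(10*(1+3*W)) with hδdef0
    have hδ : 0 < δ := by positivity
    obtain ⟨ρ, hρ0, hρt, hρT, htay⟩ := taylor hT hφ x₀ ht₀ hδ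
    set η := min (1/2 : ℝ) (B/(15*W*(G+1))) with hηdef
    have hη0 : 0 < η := lt_min one_half_pos (by positivity)
    have hη1 : η ≤ 1/2 := min_le_left _ _
    have hη2 : η*(15*W*(G+1)) ≤ B := by
      have h := min_le_right (1/2 : ℝ) (B/(15*W*(G+1)))
      calc η*(15*W*(G+1)) ≤ (B/(15*W*(G+1)))*(15*W*(G+1)) := by
            apply mul_le_mul_of_nonneg_right h (by positivity)
      _ = B := div_mul_cancel₀ _ (by positivity)
    clear_value δ η B
    obtain ⟨ε₀, hε₀, r₀, hr₀, hsmall⟩ := smallness hΛ hρ0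
      (lt_min (by positivity : (0:ℝ) < W/2) (by positivity : (0:ℝ) < B/(10*(G+1))))
      (lt_min (by positivity : (0:ℝ) < W/2) (by positivity : (0:ℝ) < 1/(2*W)))
      (by positivity : (0:ℝ) < B/(15*W*(|a|+1)))
    refine ⟨ε₀, hε₀, r₀, hr₀, ?_⟩
    intro ε hε r hr t x hdist
    refine ⟨fun h => absurd h (not_lt.2 hA.le), fun _ => ?_⟩
    obtain ⟨hε1, hwc, hsqc, hεc, hsum⟩ := hsmall ε hε r hr
    have hε0 : 0 < ε := hε.1
    set w := Λ*(r+2*ε) with hwdef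
    have hw0 : 0 ≤ w := by
      rw [hwdef]; exact mul_nonneg hΛ.le (by linarith only [hr.1, hε.1])
    have hw1 : w ≤ W/2 := le_trans hwc (min_le_left _ _)
    have hw2 : w*(10*(G+1)) ≤ B := by
      have h := le_trans hwc (min_le_right _ _)
      calc w*(10*(G+1)) ≤ (B/(10*(G+1)))*(10*(G+1)) :=
            mul_le_mul_of_nonneg_right h (by positivity)
      _ = B := div_mul_cancel₀ _ (by positivity)
    have hsq1 : Real.sqrt ε ≤ W/2 := le_trans hsqc (min_le_left _ _)
    have hsq2 : Real.sqrt ε ≤ 1/(2*W) := le_trans hsqc (min_le_right _ _)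
    have hεc' : ε*(15*W*(|a|+1)) ≤ B := by
      calc ε*(15*W*(|a|+1)) ≤ (B/(15*W*(|a|+1)))*(15*W*(|a|+1)) :=
            mul_le_mul_of_nonneg_right hεc (by positivity)
      _ = B := div_mul_cancel₀ _ (by positivity)
    have hvy : ∀ y : Euc N, dist y x ≤ 2*ε → W/2 ≤ -(v y) ∧ -(v y) ≤ 3*W/2 := by
      intro y hy
      have h0 := lip_est hL hdist hy
      have h0' : |v y - V| ≤ w := by rw [hwdef, hΛdef, hVdef]; exact h0
      have h' := abs_le.1 h0'
      constructor <;> [linarith only [h'.2, hw1, hWeq]; linarith only [h'.1, hw1, hWeq]]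
    have hball : ∀ y : Euc N, y ∈ ball x ε → v y < 0 := by
      intro y hy
      have := (hvy y (le_trans (mem_ball.1 hy).le (by linarith only [hε0]))).1
      linarith only [this, hW]
    have hnoplus : ¬ (ball x ε ∩ {y | 0 < v y}).Nonempty := by
      rintro ⟨y, hy1, hy2⟩
      have := hball y hy1
      exact absurd hy2 (by simp only [Set.mem_setOf_eq, not_lt]; linarith only [this])
    have hEp : Eplus v ε x = {x} := by
      unfold Eplus; rw [if_neg hnoplus]
    have hTP : ∀ x', TPe v ε x x' = ε^2 := by
      intro x'; unfold TPe; rw [if_neg hnoplus]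
    have hne : (ball x ε ∩ {y | v y < 0}).Nonempty :=
      ⟨x, mem_ball_self hε0, hball x (mem_ball_self hε0)⟩
    have hEm : Eminus v ε x = ball x ε := by
      unfold Eminus
      rw [if_pos hne]
      exact Set.inter_eq_left.2 (fun y hy => hball y hy)
    have hTC : ∀ xC ∈ ball x ε, TCe v ε x xC = ε / (-(v xC)) := by
      intro xC hxC
      have hd : dist xC x ≤ 2*ε := le_trans (mem_ball.1 hxC).le (by linarith only [hε0])
      obtain ⟨hv1, hv2⟩ := hvy xC hd
      have hvpos : 0 < -(v xC) := by linarith only [hv1, hW]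
      unfold TCe
      rw [if_pos hne, max_eq_left hvpos.le]
      apply cutC_eq hε0
      · rw [le_div_iff₀ hvpos]
        have h1 : Real.sqrt ε * (-(v xC)) ≤ 1 := by
          have hc : (1/(2*W)) * (3*W/2) = 3/4 := by field_simp; ring
          calc Real.sqrt ε * (-(v xC)) ≤ (1/(2*W)) * (3*W/2) := by
                apply mul_le_mul hsq2 hv2 hvpos.le
                  (le_of_lt (by apply div_pos one_pos; linarith only [hW]))
          _ ≤ 1 := by rw [hc]; norm_num
        linarith only [mul_le_mul_of_nonneg_left h1 hε0.le]
      · rw [div_le_iff₀ hvpos]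
        calc ε = Real.sqrt ε * Real.sqrt ε := (Real.mul_self_sqrt hε0.le).symm
        _ ≤ Real.sqrt ε * (-(v xC)) := mul_le_mul_of_nonneg_left
            (by linarith only [hsq1, hv1]) (Real.sqrt_nonneg ε)
    have hrρ : r ≤ ρ := by linarith only [hsum, Real.sqrt_nonneg ε, hε0]
    have htt : |t - t₀| < r := by
      rw [Prod.dist_eq] at hdist
      have := lt_of_le_of_lt (le_max_left _ _) hdist
      rwa [Real.dist_eq] at this
    have htpos : 0 < t := by
      have h1 := abs_le.1 htt.le
      linarith only [h1.1, hrρ, hρt, ht₀.1]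
    have ht2 : t + 2*Real.sqrt ε ≤ T := by
      have h1 := abs_le.1 htt.le
      linarith only [h1.2, hsum, hρT, ht₀.2, hε0]
    have hBall := hB_all (v := v) (x := x) hMb hε0 hε1 htpos ht2
    -- Carol's choice
    have hsC : (0:ℝ) ≤ (1-η)*ε := mul_nonneg (by linarith only [hη1]) hε0.le
    obtain ⟨xC, hxCd, hxCi⟩ := pick_dir_neg g x hsC
    have hxCball : xC ∈ ball x ε := by
      rw [mem_ball]
      calc dist xC x ≤ (1-η)*ε := hxCd
      _ < ε := by linarith only [mul_pos hη0 hε0]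
    have hfin : Seik v ε φ t x ≤ φ t x + ε*(-(B/(5*W))) := by
      apply Seik_upper hBall
      intro xP hxP
      rw [hEp, Set.mem_singleton_iff] at hxP
      rw [hxP]
      refine ⟨xC, by rw [hEm]; exact hxCball, ?_⟩
      rw [hTP x, hTC xC hxCball]
      have hd2 : dist xC x ≤ 2*ε := le_trans (mem_ball.1 hxCball).le (by linarith only [hε0])
      obtain ⟨hv1, hv2⟩ := hvy xC hd2
      have hvpos : 0 < -(v xC) := by linarith only [hv1, hW]
      set P := -(v xC) with hPdef
      have hPd : |P - W| ≤ w := by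
        have h0 := lip_est hL hdist hd2
        have h0' : |v xC - V| ≤ w := by rw [hwdef, hΛdef, hVdef]; exact h0
        have h' := abs_le.1 h0'
        rw [abs_le]
        constructor <;> [linarith only [h'.2, hWeq, hPdef]; linarith only [h'.1, hWeq, hPdef]]
      have hPd' := abs_le.1 hPd
      clear_value P
      have hτ0 : (0:ℝ) ≤ ε / P + ε^2 :=
        add_nonneg (div_nonneg hε0.le hvpos.le) (sq_nonneg ε)
      have hτ2 : ε / P + ε^2 ≤ 2*Real.sqrt ε := by
        have h1 : ε / P ≤ Real.sqrt ε := by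
          rw [div_le_iff₀ hvpos]
          calc ε = Real.sqrt ε * Real.sqrt ε := (Real.mul_self_sqrt hε0.le).symm
          _ ≤ Real.sqrt ε * P := mul_le_mul_of_nonneg_left
              (by linarith only [hsq1, hv1]) (Real.sqrt_nonneg ε)
        have h2 : ε^2 ≤ Real.sqrt ε := sq_le_sqrt' hε0.le hε1
        linarith only [h1, h2]
      have hq := mem_taylor_ball hdist hτ0 hτ2 hd2 hε0 hsum
      have hp : dist ((t:ℝ), x) (t₀, x₀) ≤ ρ := le_trans hdist.le hrρ
      have htay' := htay ((t:ℝ), x) ((t + (ε / P + ε^2) : ℝ), xC) hp hq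
      simp only [add_sub_cancel_left] at htay'
      rw [← hadef, ← hgdef] at htay'
      have habs := abs_le.1 htay'
      have hnx : ‖xC - x‖ ≤ (1-η)*ε := by rw [← dist_eq_norm]; exact hxCd
      have hnx2 : ‖xC - x‖ ≤ ε := by linarith only [hnx, mul_nonneg hη0.le hε0.le]
      have hup : φ (t + (ε / P + ε^2)) xC - φ t x ≤
          (ε / P + ε^2)*a - (1-η)*ε*G + δ*((ε / P + ε^2) + ε) := by
        have h1 : |(ε / P + ε^2)| = ε / P + ε^2 := abs_of_nonneg hτ0
        have h2 := habs.2
        rw [h1] at h2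
        have h3 : δ * (ε / P + ε^2 + ‖xC - x‖) ≤ δ*((ε / P + ε^2) + ε) :=
          mul_le_mul_of_nonneg_left (by linarith only [hnx2]) hδ.le
        rw [hxCi, ← hGdef] at h2
        linarith only [h2, h3]
      have key : 5*W*(a + ε*P*a - (1-η)*G*P + δ*(1+ε*P+P)) ≤ A*P := by
        have hAw : W*A = W*a - W*(W*G) := by rw [hAeqW]; ring
        have k2 : W*G*(W - P) ≤ W*G*w := by
          apply mul_le_mul_of_nonneg_left _ (mul_nonneg hW.le hG)
          linarith only [hPd'.1]
        have k3 : W*(η*G*P) ≤ W*(η*G*(3*W/2)) := by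
          apply mul_le_mul_of_nonneg_left _ hW.le
          apply mul_le_mul_of_nonneg_left hv2 (mul_nonneg hη0.le hG)
        have k4 : W*(η*(15*W*(G+1))) ≤ W*B := mul_le_mul_of_nonneg_left hη2 hW.le
        have k5 : W*(ε*P*a) ≤ W*(ε*P*|a|) := by
          apply mul_le_mul_of_nonneg_left _ hW.le
          apply mul_le_mul_of_nonneg_left (le_abs_self a) (mul_nonneg hε0.le hvpos.le)
        have k6 : W*(ε * |a| * P) ≤ W*(ε * |a| * (3*W/2)) := by
          apply mul_le_mul_of_nonneg_left _ hW.le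
          apply mul_le_mul_of_nonneg_left hv2 (mul_nonneg hε0.le (abs_nonneg a))
        have k7 : W*(ε*(15*W*(|a|+1))) ≤ W*B := mul_le_mul_of_nonneg_left hεc' hW.le
        have k8 : W*(δ*(ε*P)) ≤ W*(δ*P) := by
          apply mul_le_mul_of_nonneg_left _ hW.le
          apply mul_le_mul_of_nonneg_left _ hδ.le
          nlinarith only [hε1, hvpos, hε0, mul_le_mul_of_nonneg_right hε1 hvpos.le]
        have k9 : W*(δ*P) ≤ W*(δ*(3*W/2)) := by
          apply mul_le_mul_of_nonneg_left _ hW.le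
          exact mul_le_mul_of_nonneg_left hv2 hδ.le
        have k10 : (W/2)*(w*(10*(G+1))) ≤ (W/2)*B :=
          mul_le_mul_of_nonneg_left hw2 (by positivity)
        have hδdefv : W*(δ*(10*(1+3*W))) = W*B := by
          rw [hδdef0]; field_simp
        have hWB : 0 < W*B := mul_pos hW hB0
        have hWw : 0 ≤ W*w := mul_nonneg hW.le hw0
        have hW2η : 0 ≤ W*(W*η) := mul_nonneg hW.le (mul_nonneg hW.le hη0.le)
        have hW2ε : 0 ≤ W*(W*ε) := mul_nonneg hW.le (mul_nonneg hW.le hε0.le)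
        have hWBA : W*B = -(W*A) := by rw [hBdef0]; ring
        have kP : 0 ≤ B*(3*W/2 - P) :=
          mul_nonneg hB0.le (by linarith only [hPd'.2, hw1])
        have hABP : B*(3*W/2 - P) = -(A*(3*W/2)) + A*P := by rw [hBdef0]; ring
        linarith only [k2, k3, k4, k5, k6, k7, k8, k9, k10, hδdefv, hAw, hWB, hWw, hW2η,
          hW2ε, hWBA, kP, hABP]
      have harith : (ε / P + ε^2)*a - (1-η)*ε*G + δ*((ε / P + ε^2) + ε) ≤ ε*(-(B/(5*W))) := by
        have heq : 5*W*((ε/P + ε^2)*a - (1-η)*ε*G + δ*((ε/P + ε^2)+ε))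
            = (ε/P) * (5*W*(a + ε*P*a - (1-η)*G*P + δ*(1+ε*P+P))) := by
          field_simp [hvpos.ne']
        have heq2 : ε*A = (ε/P)*(A*P) := by field_simp [hvpos.ne']
        have hstep : (ε/P)*(5*W*(a + ε*P*a - (1-η)*G*P + δ*(1+ε*P+P))) ≤ (ε/P)*(A*P) :=
          mul_le_mul_of_nonneg_left key (by positivity)
        have h5W : (0:ℝ) < 5*W := by positivity
        have hBA : ε*(-(B/(5*W))) = (ε*A)/(5*W) := by rw [hBdef0]; ring
        rw [hBA, le_div_iff₀ h5W]
        calc ((ε/P + ε^2)*a - (1-η)*ε*G + δ*((ε/P + ε^2)+ε)) * (5*W)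
            = (ε/P) * (5*W*(a + ε*P*a - (1-η)*G*P + δ*(1+ε*P+P))) := by rw [← heq]; ring
        _ ≤ (ε/P)*(A*P) := hstep
        _ = ε*A := heq2.symm
      have heqt : t + ε^2 + ε / P = t + (ε / P + ε^2) := by ring
      rw [heqt]
      linarith only [hup, harith]
    have hneg : ε*(-(B/(5*W))) < 0 := by
      have : 0 < B/(5*W) := div_pos hB0 (by linarith only [hW])
      nlinarith only [hε0, this]
    linarith only [hfin, hneg]

end ConsistencyAux
namespace ConsistencyAux

variable {N : ℕ}

lemma cutC_ge32 {ε : ℝ} (h0 : 0 < ε) (h1 : ε ≤ 1) (s : ℝ) : ε * Real.sqrt ε ≤ cutC ε s := by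
  have h32 : ε ^ ((3:ℝ)/2) = ε * Real.sqrt ε := by
    rw [show (3:ℝ)/2 = 1 + 1/2 by norm_num, Real.rpow_add h0, Real.rpow_one, rpow_half_eq]
  unfold cutC
  rw [h32]
  apply le_min
  · exact le_max_right _ _
  · rw [rpow_half_eq]
    nlinarith [mul_nonneg (by linarith : (0:ℝ) ≤ 1 - ε) (Real.sqrt_nonneg ε)]

set_option maxHeartbeats 1600000 in
lemma caseIII {T : ℝ} (hT : 0 < T) {v : Euc N → ℝ} {L : NNReal} (hL : LipschitzWith L v)
    {φ : ℝ → Euc N → ℝ}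
    (hφ : ContDiffOn ℝ 1 (fun p : ℝ × Euc N => φ p.1 p.2) (Ioc (0:ℝ) T ×ˢ univ))
    {Mb : ℝ} (hMb : ∀ s ∈ Ioc (0:ℝ) T, ∀ y, |φ s y| ≤ Mb)
    {t₀ : ℝ} {x₀ : Euc N} (ht₀ : t₀ ∈ Ioo (0:ℝ) T) (hV0 : v x₀ = 0) :
    ∃ ε₀ > (0:ℝ), ∃ r₀ > (0:ℝ), ∀ ε ∈ Ioo (0:ℝ) ε₀, ∀ r ∈ Ioo (0:ℝ) r₀,
      ∀ (t : ℝ) (x : Euc N), dist ((t : ℝ), x) (t₀, x₀) < r →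
        (0 < deriv (fun s => φ s x₀) t₀ + v x₀ * ‖gradient (φ t₀) x₀‖ →
          0 < Seik v ε φ t x - φ t x) ∧
        (deriv (fun s => φ s x₀) t₀ + v x₀ * ‖gradient (φ t₀) x₀‖ < 0 →
          Seik v ε φ t x - φ t x < 0) := by
  set a := deriv (fun s => φ s x₀) t₀ with hadef
  set g := gradient (φ t₀) x₀ with hgdef
  set G := ‖g‖ with hGdef
  set A := a + v x₀ * G with hAdef
  have hG : 0 ≤ G := norm_nonneg g
  set Λ : ℝ := (L : ℝ) + 1 with hΛdef
  have hΛ : 0 < Λ := by positivity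
  have haA : a = A := by rw [hAdef, hV0]; ring
  clear_value a g G A Λ
  rcases lt_trichotomy A 0 with hA | hA | hA
  rotate_left
  · refine ⟨1, one_pos, 1, one_pos, fun ε _ r _ t x _ => ⟨fun h => ?_, fun h => ?_⟩⟩ <;>
      rw [hA] at h <;> exact absurd h (lt_irrefl 0)
  · -- A > 0
    set δ := A/2 with hδdef0
    have hδ : 0 < δ := hδdef0 ▸ half_pos hA
    obtain ⟨ρ, hρ0, hρt, hρT, htay⟩ := taylor hT hφ x₀ ht₀ hδ
    clear_value δ
    have hcpos : (0:ℝ) < (A/4)/(G + A/2 + 1) := by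
      apply div_pos (by linarith only [hA]) (by linarith only [hG, hA])
    obtain ⟨ε₀, hε₀, r₀, hr₀, hsmall⟩ := smallness hΛ hρ0 hcpos hcpos one_pos
    refine ⟨ε₀, hε₀, r₀, hr₀, ?_⟩
    intro ε hε r hr t x hdist
    refine ⟨fun _ => ?_, fun h => absurd h (not_lt.2 hA.le)⟩
    obtain ⟨hε1, hwc, hsqc, _, hsum⟩ := hsmall ε hε r hr
    have hε0 : 0 < ε := hε.1
    set w := Λ*(r+2*ε) with hwdef
    have hw0 : 0 ≤ w := by
      rw [hwdef]; exact mul_nonneg hΛ.le (by linarith only [hr.1, hε.1])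
    have hwc' : w*(G + A/2 + 1) ≤ A/4 := by
      calc w*(G + A/2 + 1) ≤ ((A/4)/(G + A/2 + 1))*(G + A/2 + 1) :=
            mul_le_mul_of_nonneg_right hwc (by linarith only [hG, hA])
      _ = A/4 := div_mul_cancel₀ _ (by linarith only [hG, hA] : (0:ℝ) < G + A/2 + 1).ne'
    have hsqc' : Real.sqrt ε*(G + A/2 + 1) ≤ A/4 := by
      calc Real.sqrt ε*(G + A/2 + 1) ≤ ((A/4)/(G + A/2 + 1))*(G + A/2 + 1) :=
            mul_le_mul_of_nonneg_right hsqc (by linarith only [hG, hA])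
      _ = A/4 := div_mul_cancel₀ _ (by linarith only [hG, hA] : (0:ℝ) < G + A/2 + 1).ne'
    have hvw : ∀ y : Euc N, dist y x ≤ 2*ε → |v y| ≤ w := by
      intro y hy
      have h0 := lip_est hL hdist hy
      have h0' : |v y - v x₀| ≤ w := by rw [hwdef, hΛdef]; exact h0
      rwa [hV0, sub_zero] at h0'
    have hrρ : r ≤ ρ := by linarith only [hsum, Real.sqrt_nonneg ε, hε0]
    have htt : |t - t₀| < r := by
      rw [Prod.dist_eq] at hdist
      have := lt_of_le_of_lt (le_max_left _ _) hdist
      rwa [Real.dist_eq] at this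
    have htpos : 0 < t := by
      have h1 := abs_le.1 htt.le
      linarith only [h1.1, hrρ, hρt, ht₀.1]
    have ht2 : t + 2*Real.sqrt ε ≤ T := by
      have h1 := abs_le.1 htt.le
      linarith only [h1.2, hsum, hρT, ht₀.2, hε0]
    have hBall := hB_all (v := v) (x := x) hMb hε0 hε1 htpos ht2
    have hεsq : ε*ε ≤ ε*Real.sqrt ε :=
      mul_le_mul_of_nonneg_left (self_le_sqrt hε0.le hε1) hε0.le
    obtain ⟨xP, hxP⟩ := Eplus_nonempty v ε x
    have hdP : dist xP x < ε := dist_of_mem_Eplus hε0 hxP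
    have hnxP : ‖xP - x‖ ≤ ε := by rw [← dist_eq_norm]; exact hdP.le
    -- Paul's piece
    have hpieceP : ε^2*(A/4) ≤ TPe v ε x xP * a + ⟪g, xP - x⟫
        - δ*(TPe v ε x xP + ‖xP - x‖) := by
      have hinner : -(ε*G) ≤ ⟪g, xP - x⟫ := by
        have h1 := inner_ge_neg_norm g (xP - x)
        have h2 : ‖g‖*‖xP - x‖ ≤ G*ε := by
          rw [← hGdef]; exact mul_le_mul_of_nonneg_left hnxP hG
        calc -(ε*G) = -(G*ε) := by ring
        _ ≤ -(‖g‖*‖xP - x‖) := by linarith only [h2]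
        _ ≤ ⟪g, xP - x⟫ := h1
      by_cases hne : (ball x ε ∩ {y | 0 < v y}).Nonempty
      · have hxP' : xP ∈ ball x ε ∩ {y | 0 < v y} := by
          unfold Eplus at hxP; rwa [if_pos hne] at hxP
        have hvP : 0 < v xP := hxP'.2
        have hwP : v xP ≤ w :=
          le_of_abs_le (hvw xP (le_trans hdP.le (by linarith only [hε0])))
        have hwpos : 0 < w := lt_of_lt_of_le hvP hwP
        have hTPeq : TPe v ε x xP = cutC ε (ε / v xP) := by
          unfold TPe; rw [if_pos hne, max_eq_left hvP.le]
        have h32 : ε*Real.sqrt ε ≤ TPe v ε x xP := by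
          rw [hTPeq]; exact cutC_ge32 hε0 hε1 _
        have hTPbig : ε*(G + A/2) ≤ TPe v ε x xP * (A/4) := by
          rcases le_total (ε / v xP) (Real.sqrt ε) with hc | hc
          · have h1 : ε / w ≤ ε / v xP := by
              apply div_le_div_of_nonneg_left hε0.le hvP hwP
            have h2 : ε / v xP ≤ TPe v ε x xP := by
              rw [hTPeq]
              have := min_le_cutC (ε := ε) (ε / v xP)
              rwa [min_eq_left hc] at this
            have h3 : ε*(G + A/2) ≤ (ε/w)*(A/4) := by
              rw [div_mul_eq_mul_div, le_div_iff₀ hwpos]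
              linarith only [mul_le_mul_of_nonneg_left hwc' hε0.le,
                mul_nonneg hε0.le hw0]
            have h4 : (ε/w)*(A/4) ≤ TPe v ε x xP*(A/4) :=
              mul_le_mul_of_nonneg_right (le_trans h1 h2) (by linarith only [hA])
            linarith only [h3, h4]
          · have h2 : Real.sqrt ε ≤ TPe v ε x xP := by
              rw [hTPeq]
              have := min_le_cutC (ε := ε) (ε / v xP)
              rwa [min_eq_right hc] at this
            have hss : Real.sqrt ε * (Real.sqrt ε*(G + A/2 + 1)) = ε*(G + A/2 + 1) := by
              rw [← mul_assoc, Real.mul_self_sqrt hε0.le]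
            have h3 : ε*(G + A/2) ≤ Real.sqrt ε*(A/4) := by
              linarith only [mul_le_mul_of_nonneg_left hsqc' (Real.sqrt_nonneg ε), hss, hε0]
            have h4 : Real.sqrt ε*(A/4) ≤ TPe v ε x xP*(A/4) :=
              mul_le_mul_of_nonneg_right h2 (by linarith only [hA])
            linarith only [h3, h4]
        have kaTP : TPe v ε x xP * a = TPe v ε x xP * A := by rw [haA]
        have kδTP : δ*(TPe v ε x xP) = (A/2)*(TPe v ε x xP) := by rw [hδdef0]
        have kδn : δ*‖xP - x‖ ≤ δ*ε := mul_le_mul_of_nonneg_left hnxP hδ.le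
        have kδε : δ*ε = (A/2)*ε := by rw [hδdef0]
        have k32 : ε*Real.sqrt ε*(A/4) ≤ TPe v ε x xP*(A/4) :=
          mul_le_mul_of_nonneg_right h32 (by linarith only [hA])
        have k24 : ε*ε*(A/4) ≤ ε*Real.sqrt ε*(A/4) :=
          mul_le_mul_of_nonneg_right hεsq (by linarith only [hA])
        linarith only [kaTP, kδTP, kδn, kδε, k32, k24, hinner, hTPbig]
      · have hxP' : xP ∈ ({x} : Set (Euc N)) := by
          unfold Eplus at hxP; rwa [if_neg hne] at hxP
        rw [Set.mem_singleton_iff] at hxP'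
        have hTPeq : TPe v ε x xP = ε^2 := by unfold TPe; rw [if_neg hne]
        rw [hTPeq, hxP']
        simp only [sub_self, inner_zero_right, norm_zero, add_zero]
        have ka : ε^2*a = ε^2*A := by rw [haA]
        have kδ : δ*ε^2 = (A/2)*ε^2 := by rw [hδdef0]
        have : 0 ≤ ε^2*A := mul_nonneg (sq_nonneg ε) hA.le
        linarith only [ka, kδ, this]
    -- conclude
    have hfin : φ t x + ε^2*(A/2) ≤ Seik v ε φ t x := by
      apply Seik_lower hxP hBall
      intro xC hxC
      have hdC : dist xC xP < ε := dist_of_mem_Eminus hε0 hxC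
      have hnxC : ‖xC - xP‖ ≤ ε := by rw [← dist_eq_norm]; exact hdC.le
      have hdCx : dist xC x ≤ 2*ε := by
        calc dist xC x ≤ dist xC xP + dist xP x := dist_triangle _ _ _
        _ ≤ 2*ε := by linarith only [hdC.le, hdP.le]
      -- Carol's piece
      have hpieceC : ε^2*(A/4) ≤ TCe v ε xP xC * a + ⟪g, xC - xP⟫
          - δ*(TCe v ε xP xC + ‖xC - xP‖) := by
        have hinner : -(ε*G) ≤ ⟪g, xC - xP⟫ := by
          have h1 := inner_ge_neg_norm g (xC - xP)
          have h2 : ‖g‖*‖xC - xP‖ ≤ G*ε := by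
            rw [← hGdef]; exact mul_le_mul_of_nonneg_left hnxC hG
          calc -(ε*G) = -(G*ε) := by ring
          _ ≤ -(‖g‖*‖xC - xP‖) := by linarith only [h2]
          _ ≤ ⟪g, xC - xP⟫ := h1
        by_cases hne : (ball xP ε ∩ {y | v y < 0}).Nonempty
        · have hxC' : xC ∈ ball xP ε ∩ {y | v y < 0} := by
            unfold Eminus at hxC; rwa [if_pos hne] at hxC
          have hvC : 0 < -(v xC) := by
            have := hxC'.2; simp only [Set.mem_setOf_eq] at this; linarith only [this]
          have hwC : -(v xC) ≤ w := by
            have := hvw xC hdCx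
            have := abs_le.1 this
            linarith only [this.1]
          have hwpos : 0 < w := lt_of_lt_of_le hvC hwC
          have hTCeq : TCe v ε xP xC = cutC ε (ε / (-(v xC))) := by
            unfold TCe; rw [if_pos hne, max_eq_left hvC.le]
          have h32 : ε*Real.sqrt ε ≤ TCe v ε xP xC := by
            rw [hTCeq]; exact cutC_ge32 hε0 hε1 _
          have hTCbig : ε*(G + A/2) ≤ TCe v ε xP xC * (A/4) := by
            rcases le_total (ε / (-(v xC))) (Real.sqrt ε) with hc | hc
            · have h1 : ε / w ≤ ε / (-(v xC)) := by
                apply div_le_div_of_nonneg_left hε0.le hvC hwC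
              have h2 : ε / (-(v xC)) ≤ TCe v ε xP xC := by
                rw [hTCeq]
                have := min_le_cutC (ε := ε) (ε / (-(v xC)))
                rwa [min_eq_left hc] at this
              have h3 : ε*(G + A/2) ≤ (ε/w)*(A/4) := by
                rw [div_mul_eq_mul_div, le_div_iff₀ hwpos]
                linarith only [mul_le_mul_of_nonneg_left hwc' hε0.le,
                  mul_nonneg hε0.le hw0]
              have h4 : (ε/w)*(A/4) ≤ TCe v ε xP xC*(A/4) :=
                mul_le_mul_of_nonneg_right (le_trans h1 h2) (by linarith only [hA])
              linarith only [h3, h4]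
            · have h2 : Real.sqrt ε ≤ TCe v ε xP xC := by
                rw [hTCeq]
                have := min_le_cutC (ε := ε) (ε / (-(v xC)))
                rwa [min_eq_right hc] at this
              have hss : Real.sqrt ε * (Real.sqrt ε*(G + A/2 + 1)) = ε*(G + A/2 + 1) := by
                rw [← mul_assoc, Real.mul_self_sqrt hε0.le]
              have h3 : ε*(G + A/2) ≤ Real.sqrt ε*(A/4) := by
                linarith only [mul_le_mul_of_nonneg_left hsqc' (Real.sqrt_nonneg ε), hss, hε0]
              have h4 : Real.sqrt ε*(A/4) ≤ TCe v ε xP xC*(A/4) :=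
                mul_le_mul_of_nonneg_right h2 (by linarith only [hA])
              linarith only [h3, h4]
          have kaTC : TCe v ε xP xC * a = TCe v ε xP xC * A := by rw [haA]
          have kδTC : δ*(TCe v ε xP xC) = (A/2)*(TCe v ε xP xC) := by rw [hδdef0]
          have kδn : δ*‖xC - xP‖ ≤ δ*ε := mul_le_mul_of_nonneg_left hnxC hδ.le
          have kδε : δ*ε = (A/2)*ε := by rw [hδdef0]
          have k32 : ε*Real.sqrt ε*(A/4) ≤ TCe v ε xP xC*(A/4) :=
            mul_le_mul_of_nonneg_right h32 (by linarith only [hA])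
          have k24 : ε*ε*(A/4) ≤ ε*Real.sqrt ε*(A/4) :=
            mul_le_mul_of_nonneg_right hεsq (by linarith only [hA])
          linarith only [kaTC, kδTC, kδn, kδε, k32, k24, hinner, hTCbig]
        · have hxC' : xC ∈ ({xP} : Set (Euc N)) := by
            unfold Eminus at hxC; rwa [if_neg hne] at hxC
          rw [Set.mem_singleton_iff] at hxC'
          have hTCeq : TCe v ε xP xC = ε^2 := by unfold TCe; rw [if_neg hne]
          rw [hTCeq, hxC']
          simp only [sub_self, inner_zero_right, norm_zero, add_zero]
          have ka : ε^2*a = ε^2*A := by rw [haA]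
          have kδ : δ*ε^2 = (A/2)*ε^2 := by rw [hδdef0]
          have : 0 ≤ ε^2*A := mul_nonneg (sq_nonneg ε) hA.le
          linarith only [ka, kδ, this]
      -- Taylor assembly
      set τ := TPe v ε x xP + TCe v ε xP xC with hτdef
      have hτ0 : 0 ≤ τ := by
        rw [hτdef]
        have := TPe_pos (v := v) hε0 x xP
        have := TCe_pos (v := v) hε0 xP xC
        linarith only [TPe_pos (v := v) hε0 x xP, TCe_pos (v := v) hε0 xP xC]
      have hτ2 : τ ≤ 2*Real.sqrt ε := by
        rw [hτdef]
        linarith only [TPe_le_sqrt (v := v) hε0 hε1 x xP, TCe_le_sqrt (v := v) hε0 hε1 xP xC]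
      have hq := mem_taylor_ball hdist hτ0 hτ2 hdCx hε0 hsum
      have hp : dist ((t:ℝ), x) (t₀, x₀) ≤ ρ := le_trans hdist.le hrρ
      have htay' := htay ((t:ℝ), x) ((t + τ : ℝ), xC) hp hq
      simp only [add_sub_cancel_left] at htay'
      rw [← hadef, ← hgdef] at htay'
      have habs := abs_le.1 htay'
      have h1 : |τ| = τ := abs_of_nonneg hτ0
      rw [h1] at habs
      have hinner_add : ⟪g, xC - x⟫ = ⟪g, xP - x⟫ + ⟪g, xC - xP⟫ := by
        have hsplit : xC - x = (xP - x) + (xC - xP) := by abel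
        rw [hsplit, inner_add_right]
      have hnorm_tri : ‖xC - x‖ ≤ ‖xP - x‖ + ‖xC - xP‖ := by
        have hsplit : xC - x = (xP - x) + (xC - xP) := by abel
        rw [hsplit]; exact norm_add_le _ _
      have kδtri : δ*‖xC - x‖ ≤ δ*(‖xP - x‖ + ‖xC - xP‖) :=
        mul_le_mul_of_nonneg_left hnorm_tri hδ.le
      have hteq : t + TPe v ε x xP + TCe v ε xP xC = t + τ := by rw [hτdef]; ring
      rw [hteq]
      have hτmul : τ * a = TPe v ε x xP * a + TCe v ε xP xC * a := by rw [hτdef]; ring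
      have hδτ : δ * (τ + ‖xC - x‖)
          = δ*(TPe v ε x xP) + δ*(TCe v ε xP xC) + δ*‖xC - x‖ := by rw [hτdef]; ring
      have hsq2 : ε^2*(A/2) = ε^2*(A/4) + ε^2*(A/4) := by ring
      linarith only [habs.1, hpieceP, hpieceC, hinner_add, kδtri, hτmul, hδτ, hsq2]
    have hpos : 0 < ε^2*(A/2) := by
      have h1 : (0:ℝ) < ε^2 := by positivity
      have h2 : (0:ℝ) < A/2 := by linarith only [hA]
      exact mul_pos h1 h2
    linarith only [hfin, hpos]
  · -- A < 0
    set B := -A with hBdef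
    have hBdef0 : B = -A := hBdef
    have hB0 : 0 < B := by rw [hBdef0]; linarith only [hA]
    set δ := B/2 with hδdef0
    have hδ : 0 < δ := hδdef0 ▸ half_pos hB0
    obtain ⟨ρ, hρ0, hρt, hρT, htay⟩ := taylor hT hφ x₀ ht₀ hδ
    clear_value δ B
    have hcpos : (0:ℝ) < (B/4)/(G + B/2 + 1) := by
      apply div_pos (by linarith only [hB0]) (by linarith only [hG, hB0])
    obtain ⟨ε₀, hε₀, r₀, hr₀, hsmall⟩ := smallness hΛ hρ0 hcpos hcpos one_pos
    refine ⟨ε₀, hε₀, r₀, hr₀, ?_⟩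
    intro ε hε r hr t x hdist
    refine ⟨fun h => absurd h (not_lt.2 hA.le), fun _ => ?_⟩
    obtain ⟨hε1, hwc, hsqc, _, hsum⟩ := hsmall ε hε r hr
    have hε0 : 0 < ε := hε.1
    set w := Λ*(r+2*ε) with hwdef
    have hw0 : 0 ≤ w := by
      rw [hwdef]; exact mul_nonneg hΛ.le (by linarith only [hr.1, hε.1])
    have hwc' : w*(G + B/2 + 1) ≤ B/4 := by
      calc w*(G + B/2 + 1) ≤ ((B/4)/(G + B/2 + 1))*(G + B/2 + 1) :=
            mul_le_mul_of_nonneg_right hwc (by linarith only [hG, hB0])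
      _ = B/4 := div_mul_cancel₀ _ (by linarith only [hG, hB0] : (0:ℝ) < G + B/2 + 1).ne'
    have hsqc' : Real.sqrt ε*(G + B/2 + 1) ≤ B/4 := by
      calc Real.sqrt ε*(G + B/2 + 1) ≤ ((B/4)/(G + B/2 + 1))*(G + B/2 + 1) :=
            mul_le_mul_of_nonneg_right hsqc (by linarith only [hG, hB0])
      _ = B/4 := div_mul_cancel₀ _ (by linarith only [hG, hB0] : (0:ℝ) < G + B/2 + 1).ne'
    have hvw : ∀ y : Euc N, dist y x ≤ 2*ε → |v y| ≤ w := by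
      intro y hy
      have h0 := lip_est hL hdist hy
      have h0' : |v y - v x₀| ≤ w := by rw [hwdef, hΛdef]; exact h0
      rwa [hV0, sub_zero] at h0'
    have hrρ : r ≤ ρ := by linarith only [hsum, Real.sqrt_nonneg ε, hε0]
    have htt : |t - t₀| < r := by
      rw [Prod.dist_eq] at hdist
      have := lt_of_le_of_lt (le_max_left _ _) hdist
      rwa [Real.dist_eq] at this
    have htpos : 0 < t := by
      have h1 := abs_le.1 htt.le
      linarith only [h1.1, hrρ, hρt, ht₀.1]
    have ht2 : t + 2*Real.sqrt ε ≤ T := by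
      have h1 := abs_le.1 htt.le
      linarith only [h1.2, hsum, hρT, ht₀.2, hε0]
    have hBall := hB_all (v := v) (x := x) hMb hε0 hε1 htpos ht2
    have hεsq : ε*ε ≤ ε*Real.sqrt ε :=
      mul_le_mul_of_nonneg_left (self_le_sqrt hε0.le hε1) hε0.le
    have haB : a = -B := by rw [hBdef0, haA]; ring
    have hfin : Seik v ε φ t x ≤ φ t x - ε^2*(B/2) := by
      apply Seik_upper hBall
      intro xP hxP
      have hdP : dist xP x < ε := dist_of_mem_Eplus hε0 hxP
      have hnxP : ‖xP - x‖ ≤ ε := by rw [← dist_eq_norm]; exact hdP.le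
      have hpieceP : TPe v ε x xP * a + ⟪g, xP - x⟫
          + δ*(TPe v ε x xP + ‖xP - x‖) ≤ -(ε^2*(B/4)) := by
        have hinner : ⟪g, xP - x⟫ ≤ ε*G := by
          have h1 := inner_le_norm' g (xP - x)
          have h2 : ‖g‖*‖xP - x‖ ≤ G*ε := by
            rw [← hGdef]; exact mul_le_mul_of_nonneg_left hnxP hG
          calc ⟪g, xP - x⟫ ≤ ‖g‖*‖xP - x‖ := h1
          _ ≤ G*ε := h2
          _ = ε*G := by ring
        by_cases hne : (ball x ε ∩ {y | 0 < v y}).Nonempty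
        · have hxP' : xP ∈ ball x ε ∩ {y | 0 < v y} := by
            unfold Eplus at hxP; rwa [if_pos hne] at hxP
          have hvP : 0 < v xP := hxP'.2
          have hwP : v xP ≤ w :=
            le_of_abs_le (hvw xP (le_trans hdP.le (by linarith only [hε0])))
          have hwpos : 0 < w := lt_of_lt_of_le hvP hwP
          have hTPeq : TPe v ε x xP = cutC ε (ε / v xP) := by
            unfold TPe; rw [if_pos hne, max_eq_left hvP.le]
          have h32 : ε*Real.sqrt ε ≤ TPe v ε x xP := by
            rw [hTPeq]; exact cutC_ge32 hε0 hε1 _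
          have hTPbig : ε*(G + B/2) ≤ TPe v ε x xP * (B/4) := by
            rcases le_total (ε / v xP) (Real.sqrt ε) with hc | hc
            · have h1 : ε / w ≤ ε / v xP := by
                apply div_le_div_of_nonneg_left hε0.le hvP hwP
              have h2 : ε / v xP ≤ TPe v ε x xP := by
                rw [hTPeq]
                have := min_le_cutC (ε := ε) (ε / v xP)
                rwa [min_eq_left hc] at this
              have h3 : ε*(G + B/2) ≤ (ε/w)*(B/4) := by
                rw [div_mul_eq_mul_div, le_div_iff₀ hwpos]
                linarith only [mul_le_mul_of_nonneg_left hwc' hε0.le,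
                  mul_nonneg hε0.le hw0]
              have h4 : (ε/w)*(B/4) ≤ TPe v ε x xP*(B/4) :=
                mul_le_mul_of_nonneg_right (le_trans h1 h2) (by linarith only [hB0])
              linarith only [h3, h4]
            · have h2 : Real.sqrt ε ≤ TPe v ε x xP := by
                rw [hTPeq]
                have := min_le_cutC (ε := ε) (ε / v xP)
                rwa [min_eq_right hc] at this
              have hss : Real.sqrt ε * (Real.sqrt ε*(G + B/2 + 1)) = ε*(G + B/2 + 1) := by
                rw [← mul_assoc, Real.mul_self_sqrt hε0.le]
              have h3 : ε*(G + B/2) ≤ Real.sqrt ε*(B/4) := by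
                linarith only [mul_le_mul_of_nonneg_left hsqc' (Real.sqrt_nonneg ε), hss, hε0]
              have h4 : Real.sqrt ε*(B/4) ≤ TPe v ε x xP*(B/4) :=
                mul_le_mul_of_nonneg_right h2 (by linarith only [hB0])
              linarith only [h3, h4]
          have kaTP : TPe v ε x xP * a = -(TPe v ε x xP * B) := by rw [haB]; ring
          have kδTP : δ*(TPe v ε x xP) = (B/2)*(TPe v ε x xP) := by rw [hδdef0]
          have kδn : δ*‖xP - x‖ ≤ δ*ε := mul_le_mul_of_nonneg_left hnxP hδ.le
          have kδε : δ*ε = (B/2)*ε := by rw [hδdef0]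
          have k32 : ε*Real.sqrt ε*(B/4) ≤ TPe v ε x xP*(B/4) :=
            mul_le_mul_of_nonneg_right h32 (by linarith only [hB0])
          have k24 : ε*ε*(B/4) ≤ ε*Real.sqrt ε*(B/4) :=
            mul_le_mul_of_nonneg_right hεsq (by linarith only [hB0])
          linarith only [kaTP, kδTP, kδn, kδε, k32, k24, hinner, hTPbig]
        · have hxP' : xP ∈ ({x} : Set (Euc N)) := by
            unfold Eplus at hxP; rwa [if_neg hne] at hxP
          rw [Set.mem_singleton_iff] at hxP'
          have hTPeq : TPe v ε x xP = ε^2 := by unfold TPe; rw [if_neg hne]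
          rw [hTPeq, hxP']
          simp only [sub_self, inner_zero_right, norm_zero, add_zero]
          have ka : ε^2*a = -(ε^2*B) := by rw [haB]; ring
          have kδ : δ*ε^2 = (B/2)*ε^2 := by rw [hδdef0]
          have : 0 ≤ ε^2*B := mul_nonneg (sq_nonneg ε) hB0.le
          linarith only [ka, kδ, this]
      obtain ⟨xC, hxC⟩ := Eminus_nonempty v ε xP
      refine ⟨xC, hxC, ?_⟩
      have hdC : dist xC xP < ε := dist_of_mem_Eminus hε0 hxC
      have hnxC : ‖xC - xP‖ ≤ ε := by rw [← dist_eq_norm]; exact hdC.le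
      have hdCx : dist xC x ≤ 2*ε := by
        calc dist xC x ≤ dist xC xP + dist xP x := dist_triangle _ _ _
        _ ≤ 2*ε := by linarith only [hdC.le, hdP.le]
      have hpieceC : TCe v ε xP xC * a + ⟪g, xC - xP⟫
          + δ*(TCe v ε xP xC + ‖xC - xP‖) ≤ -(ε^2*(B/4)) := by
        have hinner : ⟪g, xC - xP⟫ ≤ ε*G := by
          have h1 := inner_le_norm' g (xC - xP)
          have h2 : ‖g‖*‖xC - xP‖ ≤ G*ε := by
            rw [← hGdef]; exact mul_le_mul_of_nonneg_left hnxC hG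
          calc ⟪g, xC - xP⟫ ≤ ‖g‖*‖xC - xP‖ := h1
          _ ≤ G*ε := h2
          _ = ε*G := by ring
        by_cases hne : (ball xP ε ∩ {y | v y < 0}).Nonempty
        · have hxC' : xC ∈ ball xP ε ∩ {y | v y < 0} := by
            unfold Eminus at hxC; rwa [if_pos hne] at hxC
          have hvC : 0 < -(v xC) := by
            have := hxC'.2; simp only [Set.mem_setOf_eq] at this; linarith only [this]
          have hwC : -(v xC) ≤ w := by
            have h' := abs_le.1 (hvw xC hdCx)
            linarith only [h'.1]
          have hwpos : 0 < w := lt_of_lt_of_le hvC hwC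
          have hTCeq : TCe v ε xP xC = cutC ε (ε / (-(v xC))) := by
            unfold TCe; rw [if_pos hne, max_eq_left hvC.le]
          have h32 : ε*Real.sqrt ε ≤ TCe v ε xP xC := by
            rw [hTCeq]; exact cutC_ge32 hε0 hε1 _
          have hTCbig : ε*(G + B/2) ≤ TCe v ε xP xC * (B/4) := by
            rcases le_total (ε / (-(v xC))) (Real.sqrt ε) with hc | hc
            · have h1 : ε / w ≤ ε / (-(v xC)) := by
                apply div_le_div_of_nonneg_left hε0.le hvC hwC
              have h2 : ε / (-(v xC)) ≤ TCe v ε xP xC := by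
                rw [hTCeq]
                have := min_le_cutC (ε := ε) (ε / (-(v xC)))
                rwa [min_eq_left hc] at this
              have h3 : ε*(G + B/2) ≤ (ε/w)*(B/4) := by
                rw [div_mul_eq_mul_div, le_div_iff₀ hwpos]
                linarith only [mul_le_mul_of_nonneg_left hwc' hε0.le,
                  mul_nonneg hε0.le hw0]
              have h4 : (ε/w)*(B/4) ≤ TCe v ε xP xC*(B/4) :=
                mul_le_mul_of_nonneg_right (le_trans h1 h2) (by linarith only [hB0])
              linarith only [h3, h4]
            · have h2 : Real.sqrt ε ≤ TCe v ε xP xC := by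
                rw [hTCeq]
                have := min_le_cutC (ε := ε) (ε / (-(v xC)))
                rwa [min_eq_right hc] at this
              have hss : Real.sqrt ε * (Real.sqrt ε*(G + B/2 + 1)) = ε*(G + B/2 + 1) := by
                rw [← mul_assoc, Real.mul_self_sqrt hε0.le]
              have h3 : ε*(G + B/2) ≤ Real.sqrt ε*(B/4) := by
                linarith only [mul_le_mul_of_nonneg_left hsqc' (Real.sqrt_nonneg ε), hss, hε0]
              have h4 : Real.sqrt ε*(B/4) ≤ TCe v ε xP xC*(B/4) :=
                mul_le_mul_of_nonneg_right h2 (by linarith only [hB0])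
              linarith only [h3, h4]
          have kaTC : TCe v ε xP xC * a = -(TCe v ε xP xC * B) := by rw [haB]; ring
          have kδTC : δ*(TCe v ε xP xC) = (B/2)*(TCe v ε xP xC) := by rw [hδdef0]
          have kδn : δ*‖xC - xP‖ ≤ δ*ε := mul_le_mul_of_nonneg_left hnxC hδ.le
          have kδε : δ*ε = (B/2)*ε := by rw [hδdef0]
          have k32 : ε*Real.sqrt ε*(B/4) ≤ TCe v ε xP xC*(B/4) :=
            mul_le_mul_of_nonneg_right h32 (by linarith only [hB0])
          have k24 : ε*ε*(B/4) ≤ ε*Real.sqrt ε*(B/4) :=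
            mul_le_mul_of_nonneg_right hεsq (by linarith only [hB0])
          linarith only [kaTC, kδTC, kδn, kδε, k32, k24, hinner, hTCbig]
        · have hxC' : xC ∈ ({xP} : Set (Euc N)) := by
            unfold Eminus at hxC; rwa [if_neg hne] at hxC
          rw [Set.mem_singleton_iff] at hxC'
          have hTCeq : TCe v ε xP xC = ε^2 := by unfold TCe; rw [if_neg hne]
          rw [hTCeq, hxC']
          simp only [sub_self, inner_zero_right, norm_zero, add_zero]
          have ka : ε^2*a = -(ε^2*B) := by rw [haB]; ring
          have kδ : δ*ε^2 = (B/2)*ε^2 := by rw [hδdef0]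
          have : 0 ≤ ε^2*B := mul_nonneg (sq_nonneg ε) hB0.le
          linarith only [ka, kδ, this]
      set τ := TPe v ε x xP + TCe v ε xP xC with hτdef
      have hτ0 : 0 ≤ τ := by
        rw [hτdef]
        linarith only [TPe_pos (v := v) hε0 x xP, TCe_pos (v := v) hε0 xP xC]
      have hτ2 : τ ≤ 2*Real.sqrt ε := by
        rw [hτdef]
        linarith only [TPe_le_sqrt (v := v) hε0 hε1 x xP, TCe_le_sqrt (v := v) hε0 hε1 xP xC]
      have hq := mem_taylor_ball hdist hτ0 hτ2 hdCx hε0 hsum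
      have hp : dist ((t:ℝ), x) (t₀, x₀) ≤ ρ := le_trans hdist.le hrρ
      have htay' := htay ((t:ℝ), x) ((t + τ : ℝ), xC) hp hq
      simp only [add_sub_cancel_left] at htay'
      rw [← hadef, ← hgdef] at htay'
      have habs := abs_le.1 htay'
      have h1 : |τ| = τ := abs_of_nonneg hτ0
      rw [h1] at habs
      have hinner_add : ⟪g, xC - x⟫ = ⟪g, xP - x⟫ + ⟪g, xC - xP⟫ := by
        have hsplit : xC - x = (xP - x) + (xC - xP) := by abel
        rw [hsplit, inner_add_right]
      have hnorm_tri : ‖xC - x‖ ≤ ‖xP - x‖ + ‖xC - xP‖ := by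
        have hsplit : xC - x = (xP - x) + (xC - xP) := by abel
        rw [hsplit]; exact norm_add_le _ _
      have kδtri : δ*‖xC - x‖ ≤ δ*(‖xP - x‖ + ‖xC - xP‖) :=
        mul_le_mul_of_nonneg_left hnorm_tri hδ.le
      have hteq : t + TPe v ε x xP + TCe v ε xP xC = t + τ := by rw [hτdef]; ring
      rw [hteq]
      have hτmul : τ * a = TPe v ε x xP * a + TCe v ε xP xC * a := by rw [hτdef]; ring
      have hδτ : δ * (τ + ‖xC - x‖)
          = δ*(TPe v ε x xP) + δ*(TCe v ε xP xC) + δ*‖xC - x‖ := by rw [hτdef]; ring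
      have hsq2 : ε^2*(B/2) = ε^2*(B/4) + ε^2*(B/4) := by ring
      linarith only [habs.2, hpieceP, hpieceC, hinner_add, kδtri, hτmul, hδτ, hsq2]
    have hneg : 0 < ε^2*(B/2) := by
      have h1 : (0:ℝ) < ε^2 := by positivity
      have h2 : (0:ℝ) < B/2 := by linarith only [hB0]
      exact mul_pos h1 h2
    linarith only [hfin, hneg]

end ConsistencyAux

/-- Lemma 3.5: consistency lemma for the eikonal equation, second version. -/
theorem consistency_eikonal_second
    {N : ℕ} (hN : 1 ≤ N) (T : ℝ) (hT : 0 < T)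
    (v : Euc N → ℝ) (hv : ∃ L, LipschitzWith L v)
    (φ : ℝ → Euc N → ℝ)
    (hφ : ContDiffOn ℝ 1 (fun p : ℝ × Euc N => φ p.1 p.2) (Ioc (0:ℝ) T ×ˢ univ))
    (hφb : ∃ M, ∀ t ∈ Ioc (0:ℝ) T, ∀ x, |φ t x| ≤ M)
    (t₀ : ℝ) (x₀ : Euc N) (ht₀ : t₀ ∈ Ioo (0:ℝ) T) :
    ∃ o : ℝ → ℝ → ℝ, (∀ ε r, 0 ≤ o ε r) ∧
      Tendsto (fun p : ℝ × ℝ => o p.1 p.2) (𝓝[Ioi 0 ×ˢ Ioi 0] ((0:ℝ), (0:ℝ))) (𝓝 0) ∧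
      ∃ ε₀ > (0:ℝ), ∃ r₀ > (0:ℝ), ∀ ε ∈ Ioo (0:ℝ) ε₀, ∀ r ∈ Ioo (0:ℝ) r₀,
        ∀ (t : ℝ) (x : Euc N), dist (t, x) (t₀, x₀) < r →
          ∃ m M : ℝ, 0 < m ∧ 0 < M ∧
            m * (deriv (fun s => φ s x₀) t₀ + v x₀ * ‖gradient (φ t₀) x₀‖ - o ε r)
              ≤ Seik v ε φ t x - φ t x ∧
            Seik v ε φ t x - φ t x
              ≤ M * (deriv (fun s => φ s x₀) t₀ + v x₀ * ‖gradient (φ t₀) x₀‖ + o ε r) := by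
  obtain ⟨L, hL⟩ := hv
  obtain ⟨Mb, hMb⟩ := hφb
  have hsign : ∃ ε₀ > (0:ℝ), ∃ r₀ > (0:ℝ), ∀ ε ∈ Ioo (0:ℝ) ε₀, ∀ r ∈ Ioo (0:ℝ) r₀,
      ∀ (t : ℝ) (x : Euc N), dist ((t : ℝ), x) (t₀, x₀) < r →
        (0 < deriv (fun s => φ s x₀) t₀ + v x₀ * ‖gradient (φ t₀) x₀‖ →
          0 < Seik v ε φ t x - φ t x) ∧
        (deriv (fun s => φ s x₀) t₀ + v x₀ * ‖gradient (φ t₀) x₀‖ < 0 →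
          Seik v ε φ t x - φ t x < 0) := by
    rcases lt_trichotomy (v x₀) 0 with h | h | h
    · exact ConsistencyAux.caseII hT hL hφ hMb ht₀ h
    · exact ConsistencyAux.caseIII hT hL hφ hMb ht₀ h
    · exact ConsistencyAux.caseI hT hL hφ hMb ht₀ h
  exact ConsistencyAux.assemble (A := deriv (fun s => φ s x₀) t₀
    + v x₀ * ‖gradient (φ t₀) x₀‖) (fun ε t x => Seik v ε φ t x - φ t x) t₀ x₀ hsign
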